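/- arXiv:1202.2142 — 4 statements merged into one kernel-verified Lean document; each statement's English description precedes it below -/
import Mathlib

section
/- Let μ be the probability measure on ℝ₊ = [0,∞) with density r ↦ r·e^{-r²/2} with respect to Lebesgue measure, and let f : ℝ₊ → ℝ₊ be a bounded non-decreasing function. Then Ent_μ f ≤ ∫_{ℝ₊} f(x)·(x²/2 − 1) dμ(x). -/
open MeasureTheory Real Set Filter Topology

/-- Entropy of a nonnegative function `f` w.r.t. a measure `μ`
(with the convention `0 · ln 0 = 0`, via `Real.log 0 = 0`). -/
noncomputable def entropy {X : Type*} [MeasurableSpace X] (μ : MeasureTheory.Measure X)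
    (f : X → ℝ) : ℝ :=
  (∫ x, f x * Real.log (f x) ∂μ) - (∫ x, f x ∂μ) * Real.log (∫ x, f x ∂μ)


lemma aux_exp_tendsto : Tendsto (fun x : ℝ => exp (-x^2/2)) atTop (𝓝 0) := by
  apply Real.tendsto_exp_atBot.comp
  have h1 : Tendsto (fun x : ℝ => x^2/2) atTop atTop :=
    (tendsto_pow_atTop (two_ne_zero)).atTop_div_const (by norm_num)
  have := tendsto_neg_atTop_atBot.comp h1
  refine this.congr fun x => ?_
  simp [Function.comp, neg_div]

lemma aux_deriv1 (x : ℝ) : HasDerivAt (fun r : ℝ => -exp (-r^2/2)) (x * exp (-x^2/2)) x := by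
  have h : HasDerivAt (fun r : ℝ => -r^2/2) (-x) x := by
    have := ((hasDerivAt_pow 2 x).neg).div_const 2
    simpa using this.congr_deriv (by ring)
  have := (h.exp).neg
  exact this.congr_deriv (by ring)

lemma aux_deriv2 (x : ℝ) :
    HasDerivAt (fun r : ℝ => -((r^2+2) * exp (-r^2/2))) (x^3 * exp (-x^2/2)) x := by
  have h : HasDerivAt (fun r : ℝ => -r^2/2) (-x) x := by
    have := ((hasDerivAt_pow 2 x).neg).div_const 2
    simpa using this.congr_deriv (by ring)
  have h2 : HasDerivAt (fun r : ℝ => r^2+2) (2*x) x := by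
    simpa using (hasDerivAt_pow 2 x).add_const 2
  have := (h2.mul h.exp).neg
  apply this.congr_deriv
  ring

lemma aux_exp2_tendsto : Tendsto (fun x : ℝ => -((x^2+2) * exp (-x^2/2))) atTop (𝓝 0) := by
  have h1 : Tendsto (fun u : ℝ => (2*u+2) * exp (-u)) atTop (𝓝 0) := by
    have ha := tendsto_pow_mul_exp_neg_atTop_nhds_zero 1
    have hb := tendsto_pow_mul_exp_neg_atTop_nhds_zero 0
    have := (ha.const_mul 2).add (hb.const_mul 2)
    simpa [add_mul, mul_assoc] using this
  have h2 : Tendsto (fun x : ℝ => x^2/2) atTop atTop :=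
    (tendsto_pow_atTop (two_ne_zero)).atTop_div_const (by norm_num)
  have := (h1.comp h2).neg
  simp only [Function.comp, neg_zero] at this
  refine this.congr fun x => ?_
  rw [neg_div]
  ring

lemma aux_neg_exp_tendsto : Tendsto (fun x : ℝ => -exp (-x^2/2)) atTop (𝓝 0) := by
  simpa using aux_exp_tendsto.neg

lemma aux_integrableOn_w {a : ℝ} (ha : 0 ≤ a) :
    IntegrableOn (fun r : ℝ => r * exp (-r^2/2)) (Ioi a) :=
  integrableOn_Ioi_deriv_of_nonneg' (fun x _ => aux_deriv1 x)
    (fun x hx => mul_nonneg (ha.trans hx.le) (exp_pos _).le) aux_neg_exp_tendsto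

lemma aux_integral_w {a : ℝ} (ha : 0 ≤ a) :
    ∫ x in Ioi a, x * exp (-x^2/2) = exp (-a^2/2) := by
  rw [integral_Ioi_of_hasDerivAt_of_nonneg' (fun x _ => aux_deriv1 x)
    (fun x hx => mul_nonneg (ha.trans hx.le) (exp_pos _).le) aux_neg_exp_tendsto]
  ring

lemma aux_w_meas : Measurable (fun r : ℝ => ENNReal.ofReal (r * exp (-r^2/2))) :=
  (Continuous.measurable (by continuity)).ennreal_ofReal

section
variable {μ : Measure ℝ}
  (hμ : μ = (volume.restrict (Set.Ici (0 : ℝ))).withDensity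
    fun r => ENNReal.ofReal (r * Real.exp (-r ^ 2 / 2)))
include hμ

lemma aux_measure_Ioi {a : ℝ} (ha : 0 ≤ a) :
    μ (Ioi a) = ENNReal.ofReal (exp (-a^2/2)) := by
  subst hμ
  have hsub : Ioi a ∩ Ici 0 = Ioi a := inter_eq_left.2 fun x hx => ha.trans (le_of_lt hx)
  rw [withDensity_apply _ measurableSet_Ioi,
    Measure.restrict_restrict measurableSet_Ioi, hsub,
    ← ofReal_integral_eq_lintegral_ofReal (aux_integrableOn_w ha)
      ((ae_restrict_iff' measurableSet_Ioi).2 (ae_of_all _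
        (fun x hx => mul_nonneg (ha.trans (le_of_lt hx)) (exp_pos _).le)))]
  rw [aux_integral_w ha]

lemma aux_ac : μ ≪ (volume : Measure ℝ) := by
  subst hμ
  exact (withDensity_absolutelyContinuous _ _).trans
    (Measure.absolutelyContinuous_of_le Measure.restrict_le_self)

lemma aux_Iio_null : μ (Iio 0) = 0 := by
  subst hμ
  rw [withDensity_apply _ measurableSet_Iio,
    Measure.restrict_restrict measurableSet_Iio]
  have h : Iio (0:ℝ) ∩ Ici 0 = ∅ := by
    ext x
    simp only [mem_inter_iff, mem_Iio, mem_Ici, mem_empty_iff_false, iff_false, not_and, not_le]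
    intro h1; exact h1
  simp [h]

lemma aux_ae_nonneg : ∀ᵐ x ∂μ, 0 ≤ x := by
  rw [ae_iff]
  have : {x : ℝ | ¬ 0 ≤ x} = Iio 0 := by ext x; simp [not_le]
  rw [this]
  exact aux_Iio_null hμ

lemma aux_prob : IsProbabilityMeasure μ := by
  constructor
  have h1 : μ univ = μ (Iio 0) + μ (Ici 0) := by
    rw [← measure_union (by intro s hs1 hs2 x hx; exact absurd ((hs2 hx)) (by
      have := hs1 hx; simp at this ⊢; linarith)) measurableSet_Ici]
    simp [Iio_union_Ici]
  have h2 : μ (Ici 0) = μ ({0} : Set ℝ) + μ (Ioi 0) := by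
    rw [← measure_union (by simp [Set.disjoint_left]) measurableSet_Ioi]
    congr 1
    ext x; simp [le_iff_lt_or_eq, or_comm]
  have h3 : μ ({0} : Set ℝ) = 0 := aux_ac hμ (measure_singleton 0)
  have h4 := aux_measure_Ioi hμ (le_refl 0)
  rw [h1, aux_Iio_null hμ, h2, h3, h4]
  norm_num

lemma aux_x2_int : Integrable (fun x : ℝ => x^2) μ := by
  subst hμ
  rw [integrable_withDensity_iff aux_w_meas (ae_of_all _ fun x => ENNReal.ofReal_lt_top)]
  have hbase : IntegrableOn (fun x : ℝ => x^3 * exp (-x^2/2)) (Ici 0) := by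
    rw [integrableOn_Ici_iff_integrableOn_Ioi]
    exact integrableOn_Ioi_deriv_of_nonneg' (fun x _ => aux_deriv2 x)
      (fun x hx => mul_nonneg (pow_nonneg hx.le 3) (exp_pos _).le) aux_exp2_tendsto
  refine hbase.congr ((ae_restrict_iff' measurableSet_Ici).2 (ae_of_all _ fun x hx => ?_))
  simp only []
  rw [ENNReal.toReal_ofReal (mul_nonneg hx (exp_pos _).le)]
  ring
variable {g : ℝ → ℝ} (hg_mono : Monotone g) (hg0 : ∀ x, 0 ≤ g x)
  {C : ℝ} (hgC : ∀ x, g x ≤ C)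

include hμ hg_mono hg0 hgC

lemma aux_main : entropy μ g ≤ ∫ x, g x * (x^2/2 - 1) ∂μ := by
  haveI := aux_prob hμ
  have hgmble : Measurable g := hg_mono.measurable
  have hC0 : 0 ≤ C := (hg0 0).trans (hgC 0)
  have hg_int : Integrable g μ :=
    (integrable_const C).mono' hgmble.aestronglyMeasurable
      (ae_of_all _ fun x => by rw [Real.norm_eq_abs, abs_of_nonneg (hg0 x)]; exact hgC x)
  have hp1_bound : ∀ x, |g x * log (g x)| ≤ 1 + C * |log C| := by
    intro x
    rcases (hg0 x).lt_or_eq with hgx | hgx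
    · rcases le_or_gt (g x) 1 with h1 | h1
      · have hlog : log (g x) ≤ 0 := Real.log_nonpos (hg0 x) h1
        have h2 : -log (g x) = log (g x)⁻¹ := (Real.log_inv _).symm
        have h3 : log (g x)⁻¹ ≤ (g x)⁻¹ - 1 := Real.log_le_sub_one_of_pos (by positivity)
        have h4 : g x * (-log (g x)) ≤ g x * ((g x)⁻¹ - 1) :=
          mul_le_mul_of_nonneg_left (h2 ▸ h3) (hg0 x)
        have h5 : g x * ((g x)⁻¹ - 1) = 1 - g x := by field_simp
        rw [abs_of_nonpos (mul_nonpos_of_nonneg_of_nonpos (hg0 x) hlog)]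
        have : |log C| * C ≥ 0 := by positivity
        nlinarith [hg0 x]
      · have hC1 : 1 < C := lt_of_lt_of_le h1 (hgC x)
        have hlogx : 0 ≤ log (g x) := Real.log_nonneg h1.le
        have h2 : log (g x) ≤ log C := Real.log_le_log hgx (hgC x)
        have h3 : g x * log (g x) ≤ C * log C :=
          mul_le_mul (hgC x) h2 hlogx hC0
        rw [abs_of_nonneg (mul_nonneg (hg0 x) hlogx)]
        have : log C = |log C| := (abs_of_nonneg (Real.log_nonneg hC1.le)).symm
        nlinarith
    · rw [← hgx]; simp; positivity
  have hp1_int : Integrable (fun x => g x * log (g x)) μ :=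
    (integrable_const (1 + C * |log C|)).mono'
      (hgmble.mul (Real.measurable_log.comp hgmble)).aestronglyMeasurable
      (ae_of_all _ fun x => by rw [Real.norm_eq_abs]; exact hp1_bound x)
  have hp2_int : Integrable (fun x => g x * (x^2/2 - 1)) μ := by
    refine (((aux_x2_int hμ).div_const 2).add (integrable_const 1)).const_mul C |>.mono'
      (hgmble.mul (by fun_prop)).aestronglyMeasurable (ae_of_all _ fun x => ?_)
    rw [Real.norm_eq_abs, abs_mul, abs_of_nonneg (hg0 x)]
    have h1 : |x^2/2 - 1| ≤ x^2/2 + 1 := by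
      rw [abs_le]; constructor <;> nlinarith [sq_nonneg x]
    calc g x * |x^2/2-1| ≤ C * (x^2/2 + 1) :=
          mul_le_mul (hgC x) h1 (abs_nonneg _) hC0
      _ = C * (x^2/2 + 1) := rfl
  set M := ∫ x, g x ∂μ with hM
  have hM0 : 0 ≤ M := integral_nonneg fun x => hg0 x
  rcases hM0.lt_or_eq with hMpos | hMzero
  case inr =>
    -- M = 0
    have hgz : g =ᵐ[μ] 0 := (integral_eq_zero_iff_of_nonneg (fun x => hg0 x) hg_int).1 hMzero.symm
    have h1 : ∫ x, g x * log (g x) ∂μ = 0 := by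
      rw [integral_congr_ae (g := fun _ => (0:ℝ)) ?_, integral_zero]
      filter_upwards [hgz] with x hx
      simp only [Pi.zero_apply] at hx
      simp [hx]
    have h2 : ∫ x, g x * (x^2/2 - 1) ∂μ = 0 := by
      rw [integral_congr_ae (g := fun _ => (0:ℝ)) ?_, integral_zero]
      filter_upwards [hgz] with x hx
      simp only [Pi.zero_apply] at hx
      simp [hx]
    rw [show entropy μ g = (∫ x, g x * log (g x) ∂μ) - M * log M from by rw [entropy, ← hM],
      h1, h2, ← hMzero]
    simp
  case inl =>
    set ν := μ.withDensity (fun x => ENNReal.ofReal (g x)) with hν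
    have hν_apply : ∀ s : Set ℝ, MeasurableSet s → ν s = ENNReal.ofReal (∫ x in s, g x ∂μ) := by
      intro s hs
      rw [hν, withDensity_apply _ hs,
        ← ofReal_integral_eq_lintegral_ofReal hg_int.integrableOn
          (ae_restrict_of_ae (ae_of_all _ hg0))]
    haveI hν_fin : IsFiniteMeasure ν := by
      constructor
      rw [hν_apply univ MeasurableSet.univ]
      exact ENNReal.ofReal_lt_top
    have hν_univ : ν univ = ENNReal.ofReal M := by
      rw [hν_apply _ MeasurableSet.univ, Measure.restrict_univ]
    set H : ℝ → ℝ := fun x => (ν (Ioi x)).toReal with hH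
    have hH_eq : ∀ x, H x = ∫ y in Ioi x, g y ∂μ := by
      intro x
      simp only [hH]
      rw [hν_apply _ measurableSet_Ioi,
        ENNReal.toReal_ofReal (setIntegral_nonneg measurableSet_Ioi fun y _ => hg0 y)]
    have hH_nonneg : ∀ x, 0 ≤ H x := fun x => ENNReal.toReal_nonneg
    have hH_le_M : ∀ x, H x ≤ M := by
      intro x
      rw [hH_eq]
      exact setIntegral_le_integral hg_int (ae_of_all _ hg0)
    have hH_anti : Antitone H := by
      intro x y hxy
      exact ENNReal.toReal_mono (measure_ne_top _ _) (measure_mono (Ioi_subset_Ioi hxy))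
    have hH_meas : Measurable H := hH_anti.measurable
    have hfF_le_H : ∀ x, 0 ≤ x → g x * exp (-x^2/2) ≤ H x := by
      intro x hx
      have h1 : ∫ _ in Ioi x, g x ∂μ ≤ ∫ y in Ioi x, g y ∂μ := by
        refine setIntegral_mono_on (integrableOn_const (measure_ne_top _ _))
          hg_int.integrableOn measurableSet_Ioi fun y hy => hg_mono (le_of_lt hy)
      rw [setIntegral_const, measureReal_def, aux_measure_Ioi hμ hx,
        ENNReal.toReal_ofReal (exp_pos _).le, smul_eq_mul] at h1
      rw [hH_eq]
      calc g x * exp (-x^2/2) = exp (-x^2/2) * g x := by ring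
        _ ≤ _ := h1
    have hν_null : ∀ s : Set ℝ, volume s = 0 → ν s = 0 := fun s hs =>
      (withDensity_absolutelyContinuous μ _) (aux_ac hμ hs)
    have hH_neg : ∀ x : ℝ, x < 0 → H x = M := by
      intro x hx
      have hIic : ν (Iic x) = 0 := by
        apply measure_mono_null (t := Iio 0) (fun y (hy : y ≤ x) => lt_of_le_of_lt hy hx)
        rw [hν]
        exact (withDensity_absolutelyContinuous μ _) (aux_Iio_null hμ)
      have hcover : ν univ ≤ ν (Ioi x) + ν (Iic x) := by
        rw [← measure_union (by simp [Set.disjoint_left]) measurableSet_Iic]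
        apply measure_mono
        intro y _
        simp [lt_or_ge x y]
      rw [hIic, add_zero] at hcover
      have : ν (Ioi x) = ν univ := le_antisymm (measure_mono (subset_univ _)) hcover
      simp only [hH]
      rw [this, hν_univ, ENNReal.toReal_ofReal hM0]
    have hkey : ∀ a : ℝ, 0 < a → a < M → ENNReal.ofReal a ≤ ν {x | H x < a} := by
      intro a ha haM
      have hS_meas : MeasurableSet {x | H x < a} := hH_meas measurableSet_Iio
      have hS_ne : {x | H x < a}.Nonempty := by
        have h0 : Tendsto (fun n : ℕ => ν (Ioi (n:ℝ))) atTop (𝓝 (ν (⋂ n : ℕ, Ioi (n:ℝ)))) := by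
          exact tendsto_measure_iInter_atTop
            (fun n => measurableSet_Ioi.nullMeasurableSet)
            (fun n m hnm => Ioi_subset_Ioi (by exact_mod_cast hnm))
            ⟨0, measure_ne_top _ _⟩
        have hempty : (⋂ n : ℕ, Ioi (n:ℝ)) = ∅ := by
          ext y
          simp only [mem_iInter, mem_Ioi, mem_empty_iff_false, iff_false, not_forall, not_lt]
          obtain ⟨n, hn⟩ := exists_nat_gt y
          exact ⟨n, hn.le⟩
        rw [hempty, measure_empty] at h0
        obtain ⟨n, hn⟩ := (h0.eventually_lt_const (ENNReal.ofReal_pos.2 ha)).exists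
        exact ⟨(n:ℝ), ENNReal.toReal_lt_of_lt_ofReal hn⟩
      have hS_bdd : BddBelow {x | H x < a} := by
        refine ⟨0, fun x hx => ?_⟩
        by_contra hx0
        push_neg at hx0
        rw [mem_setOf_eq, hH_neg x hx0] at hx
        exact absurd hx (not_lt.2 haM.le)
      set x₀ := sInf {x | H x < a} with hx₀
      have hup : Ioi x₀ ⊆ {x | H x < a} := by
        intro x hx
        obtain ⟨s, hsS, hsx⟩ := exists_lt_of_csInf_lt hS_ne hx
        exact lt_of_le_of_lt (hH_anti hsx.le) hsS
      have hIci : Ici x₀ = ⋂ n : ℕ, Ioi (x₀ - 1/(n+1)) := by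
        ext y
        simp only [mem_Ici, mem_iInter, mem_Ioi]
        constructor
        · intro h n
          have h1 : (0:ℝ) < 1/((n:ℝ)+1) := by positivity
          linarith
        · intro h
          by_contra hy
          push_neg at hy
          obtain ⟨n, hn⟩ := exists_nat_one_div_lt (by linarith : (0:ℝ) < x₀ - y)
          have h2 := h n
          linarith
      have htnd : Tendsto (fun n : ℕ => ν (Ioi (x₀ - 1/((n:ℝ)+1)))) atTop (𝓝 (ν (Ici x₀))) := by
        rw [hIci]
        refine tendsto_measure_iInter_atTop
          (fun n => measurableSet_Ioi.nullMeasurableSet)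
          (fun n m hnm => Ioi_subset_Ioi ?_) ⟨0, measure_ne_top _ _⟩
        have : (1:ℝ)/((m:ℝ)+1) ≤ 1/((n:ℝ)+1) := by
          apply one_div_le_one_div_of_le (by positivity)
          linarith [(Nat.cast_le (α := ℝ)).2 hnm]
        linarith
      have hlb : ∀ n : ℕ, ENNReal.ofReal a ≤ ν (Ioi (x₀ - 1/((n:ℝ)+1))) := by
        intro n
        have hxn : x₀ - 1/((n:ℝ)+1) ∉ {x | H x < a} := by
          intro hmem
          have h1 : x₀ ≤ x₀ - 1/((n:ℝ)+1) := csInf_le hS_bdd hmem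
          have h2 : (0:ℝ) < 1/((n:ℝ)+1) := by positivity
          linarith
        have : a ≤ H (x₀ - 1/((n:ℝ)+1)) := not_lt.1 hxn
        exact ENNReal.ofReal_le_of_le_toReal this
      have hIci_ge : ENNReal.ofReal a ≤ ν (Ici x₀) := ge_of_tendsto htnd (Eventually.of_forall hlb)
      have hsingle : ν {x₀} = 0 := hν_null _ (Real.volume_singleton)
      have hIciU : Ici x₀ = {x₀} ∪ Ioi x₀ := by
        ext y
        simp only [mem_Ici, mem_union, mem_singleton_iff, mem_Ioi]
        rw [le_iff_eq_or_lt]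
        exact ⟨fun h => h.imp_left Eq.symm, fun h => h.imp_left Eq.symm⟩
      have hIoi_ge : ENNReal.ofReal a ≤ ν (Ioi x₀) := by
        have h1 : ν (Ici x₀) ≤ ν {x₀} + ν (Ioi x₀) := hIciU ▸ measure_union_le _ _
        rw [hsingle, zero_add] at h1
        exact hIci_ge.trans h1
      exact hIoi_ge.trans (measure_mono hup)
    have hH0 : ν {x | H x = 0} = 0 := by
      rcases eq_empty_or_nonempty {x | H x = 0} with hAe | hAne
      · rw [hAe]; exact measure_empty
      · have hA_bdd : BddBelow {x | H x = 0} := by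
          refine ⟨0, fun x hx => ?_⟩
          by_contra h
          push_neg at h
          rw [mem_setOf_eq, hH_neg x h] at hx
          exact absurd hx (ne_of_gt hMpos)
        set x₁ := sInf {x | H x = 0} with hx₁
        have hup : ∀ x, x₁ < x → H x = 0 := by
          intro x hx
          obtain ⟨s, hsA, hsx⟩ := exists_lt_of_csInf_lt hAne hx
          exact le_antisymm (le_of_le_of_eq (hH_anti hsx.le) hsA) (hH_nonneg x)
        have hIoiU : Ioi x₁ = ⋃ n : ℕ, Ioi (x₁ + 1/((n:ℝ)+1)) := by
          ext y
          simp only [mem_Ioi, mem_iUnion]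
          constructor
          · intro h
            obtain ⟨n, hn⟩ := exists_nat_one_div_lt (by linarith : (0:ℝ) < y - x₁)
            exact ⟨n, by linarith⟩
          · rintro ⟨n, hn⟩
            have : (0:ℝ) < 1/((n:ℝ)+1) := by positivity
            linarith
        have hIoi : ν (Ioi x₁) = 0 := by
          rw [hIoiU]
          refine measure_iUnion_null fun n => ?_
          have h1 : H (x₁ + 1/((n:ℝ)+1)) = 0 := hup _ (by
            have : (0:ℝ) < 1/((n:ℝ)+1) := by positivity
            linarith)
          simp only [hH] at h1
          rcases (ENNReal.toReal_eq_zero_iff _).1 h1 with h | h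
          · exact h
          · exact absurd h (measure_ne_top _ _)
        have hsub : {x | H x = 0} ⊆ Ici x₁ := fun x hx => csInf_le hA_bdd hx
        have hIciU : Ici x₁ = {x₁} ∪ Ioi x₁ := by
          ext y
          simp only [mem_Ici, mem_union, mem_singleton_iff, mem_Ioi]
          rw [le_iff_eq_or_lt]
          exact ⟨fun h => h.imp_left Eq.symm, fun h => h.imp_left Eq.symm⟩
        have h2 : ν {x | H x = 0} ≤ ν {x₁} + ν (Ioi x₁) :=
          le_trans (measure_mono (hsub.trans hIciU.subset)) (measure_union_le _ _)
        rw [hν_null _ Real.volume_singleton, hIoi, add_zero] at h2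
        exact le_antisymm h2 zero_le
    have hae_Hpos : ∀ᵐ x ∂ν, 0 < H x := by
      rw [ae_iff]
      have h1 : {x | ¬ 0 < H x} = {x | H x = 0} := by
        ext x
        simp only [mem_setOf_eq, not_lt]
        exact ⟨fun h => le_antisymm h (hH_nonneg x), fun h => h.le⟩
      rw [h1]
      exact hH0
    have hG_meas : Measurable fun x => log M - log (H x) :=
      measurable_const.sub (Real.measurable_log.comp hH_meas)
    have hG_nn : 0 ≤ᵐ[ν] fun x => log M - log (H x) := by
      filter_upwards [hae_Hpos] with x hx
      have := Real.log_le_log hx (hH_le_M x)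
      simp only [Pi.zero_apply]
      linarith
    have hlayer : ENNReal.ofReal M ≤ ∫⁻ x, ENNReal.ofReal (log M - log (H x)) ∂ν := by
      rw [lintegral_eq_lintegral_meas_lt ν hG_nn hG_meas.aemeasurable]
      have hbound : ∀ᵐ t ∂(volume.restrict (Ioi (0:ℝ))),
          ENNReal.ofReal (M * exp (-t)) ≤ ν {x | t < log M - log (H x)} := by
        rw [ae_restrict_iff' measurableSet_Ioi]
        refine ae_of_all _ fun t ht => ?_
        have hMe : 0 < M * exp (-t) := by positivity
        have hMe' : M * exp (-t) < M := by
          have h1 : exp (-t) < 1 := exp_lt_one_iff.2 (by simpa using ht)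
          nlinarith
        have h1 : {x | 0 < H x ∧ H x < M * exp (-t)} ⊆ {x | t < log M - log (H x)} := by
          rintro x ⟨hx1, hx2⟩
          have h2 := Real.log_lt_log hx1 hx2
          rw [Real.log_mul (ne_of_gt hMpos) (exp_ne_zero _), Real.log_exp] at h2
          simp only [mem_setOf_eq]
          linarith
        have h2 : ν {x | H x < M * exp (-t)}
            ≤ ν {x | 0 < H x ∧ H x < M * exp (-t)} + ν {x | H x = 0} := by
          refine le_trans (measure_mono fun x hx => ?_) (measure_union_le _ _)
          rcases (hH_nonneg x).lt_or_eq with h | h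
          · exact Or.inl ⟨h, hx⟩
          · exact Or.inr h.symm
        rw [hH0, add_zero] at h2
        exact le_trans (hkey _ hMe hMe') (le_trans h2 (measure_mono h1))
      calc ENNReal.ofReal M = ∫⁻ t in Ioi (0:ℝ), ENNReal.ofReal (M * exp (-t)) := by
            have hint : IntegrableOn (fun t : ℝ => M * exp (-t)) (Ioi 0) := by
              have := (exp_neg_integrableOn_Ioi 0 one_pos).const_mul M
              simp only [neg_mul, one_mul] at this
              exact this
            rw [← ofReal_integral_eq_lintegral_ofReal hint
              (ae_restrict_of_ae (ae_of_all _ fun t => by positivity))]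
            congr 1
            rw [MeasureTheory.integral_const_mul, integral_exp_neg_Ioi_zero, mul_one]
        _ ≤ _ := lintegral_mono_ae hbound
    set ψ : ℝ → ℝ := fun x => g x * (log M - log (H x)) with hψ
    have hψ_meas : Measurable ψ := hgmble.mul hG_meas
    have hlψ : ENNReal.ofReal M ≤ ∫⁻ x, ENNReal.ofReal (ψ x) ∂μ := by
      have heq : ∫⁻ x, ENNReal.ofReal (ψ x) ∂μ
          = ∫⁻ x, ENNReal.ofReal (log M - log (H x)) ∂ν := by
        rw [hν, lintegral_withDensity_eq_lintegral_mul _ hgmble.ennreal_ofReal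
          hG_meas.ennreal_ofReal]
        refine lintegral_congr fun x => ?_
        simp only [Pi.mul_apply, hψ]
        rw [← ENNReal.ofReal_mul (hg0 x)]
      rw [heq]
      exact hlayer
    set φ : ℝ → ℝ := fun x => g x * log (g x) - g x * (x^2/2 - 1) - g x * log M with hφ
    have hφ_int : Integrable φ μ := (hp1_int.sub hp2_int).sub (hg_int.mul_const (log M))
    have hφ_le : ∀ᵐ x ∂μ, φ x ≤ g x - ψ x := by
      filter_upwards [aux_ae_nonneg hμ] with x hx
      simp only [hφ, hψ]
      rcases (hg0 x).lt_or_eq with hgx | hgx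
      · have hHpos : 0 < H x :=
          lt_of_lt_of_le (by positivity : (0:ℝ) < g x * exp (-x^2/2)) (hfF_le_H x hx)
        have h1 : log (g x) + (-x^2/2) ≤ log (H x) := by
          rw [← Real.log_exp (-x^2/2), ← Real.log_mul (ne_of_gt hgx) (exp_ne_zero _)]
          exact Real.log_le_log (by positivity) (hfF_le_H x hx)
        have h2 := mul_le_mul_of_nonneg_left h1 (hg0 x)
        nlinarith [h2]
      · rw [← hgx]; simp
    have hψ_nn : ∀ᵐ x ∂μ, 0 ≤ ψ x := by
      filter_upwards [aux_ae_nonneg hμ] with x hx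
      simp only [hψ]
      rcases (hg0 x).lt_or_eq with hgx | hgx
      · have hHpos : 0 < H x :=
          lt_of_lt_of_le (by positivity : (0:ℝ) < g x * exp (-x^2/2)) (hfF_le_H x hx)
        have h1 : log (H x) ≤ log M := Real.log_le_log hHpos (hH_le_M x)
        exact mul_nonneg (hg0 x) (by linarith)
      · rw [← hgx]; simp
    have hψ_int : Integrable ψ μ := by
      refine (hg_int.sub hφ_int).mono' hψ_meas.aestronglyMeasurable ?_
      filter_upwards [hφ_le, hψ_nn] with x h1 h2
      rw [Real.norm_eq_abs, abs_of_nonneg h2]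
      simp only [Pi.sub_apply]
      linarith
    have hψ_ge : M ≤ ∫ x, ψ x ∂μ := by
      rw [integral_eq_lintegral_of_nonneg_ae hψ_nn hψ_meas.aestronglyMeasurable]
      have hfin : ∫⁻ x, ENNReal.ofReal (ψ x) ∂μ ≠ ⊤ :=
        ne_of_lt ((hasFiniteIntegral_iff_ofReal hψ_nn).1 hψ_int.hasFiniteIntegral)
      have h1 := ENNReal.toReal_mono hfin hlψ
      rwa [ENNReal.toReal_ofReal hM0] at h1
    have hint : ∫ x, φ x ∂μ ≤ ∫ x, (g x - ψ x) ∂μ :=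
      integral_mono_ae hφ_int (hg_int.sub hψ_int) hφ_le
    rw [integral_sub hg_int hψ_int] at hint
    have hexp : ∫ x, φ x ∂μ
        = (∫ x, g x * log (g x) ∂μ) - (∫ x, g x * (x^2/2 - 1) ∂μ) - M * log M := by
      have e3 : ∫ x, ((g x * log (g x) - g x * (x^2/2 - 1)) - g x * log M) ∂μ
          = (∫ x, (g x * log (g x) - g x * (x^2/2 - 1)) ∂μ) - ∫ x, g x * log M ∂μ :=
        integral_sub (hp1_int.sub hp2_int) (hg_int.mul_const _)
      have e2 : ∫ x, (g x * log (g x) - g x * (x^2/2 - 1)) ∂μ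
          = (∫ x, g x * log (g x) ∂μ) - ∫ x, g x * (x^2/2 - 1) ∂μ :=
        integral_sub hp1_int hp2_int
      have e4 : ∫ x, g x * log M ∂μ = M * log M := by
        rw [MeasureTheory.integral_mul_const, ← hM]
      simp only [hφ]
      rw [e3, e2, e4]
    rw [show entropy μ g = (∫ x, g x * log (g x) ∂μ) - M * log M from by rw [entropy, ← hM]]
    rw [hexp] at hint
    linarith [hψ_ge, hint]
end


/-- One-dimensional entropy inequality for the measure on `ℝ₊` with density
`r ↦ r·e^(-r²/2)`: for a bounded non-decreasing `f : ℝ₊ → ℝ₊`,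
`Ent_μ f ≤ ∫ f(x)·(x²/2 - 1) dμ(x)`. -/
theorem entropy_le_integral_gaussian_radial
    (μ : Measure ℝ)
    (hμ : μ = (volume.restrict (Set.Ici (0 : ℝ))).withDensity
      fun r => ENNReal.ofReal (r * Real.exp (-r ^ 2 / 2)))
    (f : ℝ → ℝ)
    (hf_nonneg : ∀ x ∈ Set.Ici (0 : ℝ), 0 ≤ f x)
    (hf_mono : MonotoneOn f (Set.Ici (0 : ℝ)))
    (hf_bdd : ∃ C : ℝ, ∀ x ∈ Set.Ici (0 : ℝ), f x ≤ C) :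
    entropy μ f ≤ ∫ x, f x * (x ^ 2 / 2 - 1) ∂μ := by
  obtain ⟨C, hC⟩ := hf_bdd
  set g : ℝ → ℝ := fun x => f (max x 0) with hg
  have hg_mono : Monotone g := fun x y hxy =>
    hf_mono (le_max_right x 0) (le_max_right y 0) (max_le_max hxy le_rfl)
  have hg0 : ∀ x, 0 ≤ g x := fun x => hf_nonneg _ (le_max_right x 0)
  have hgC : ∀ x, g x ≤ C := fun x => hC _ (le_max_right x 0)
  have hfg : ∀ᵐ x ∂μ, f x = g x := by
    filter_upwards [aux_ae_nonneg hμ] with x hx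
    simp only [hg]
    rw [max_eq_left hx]
  have h1 : ∫ x, f x ∂μ = ∫ x, g x ∂μ :=
    integral_congr_ae (by filter_upwards [hfg] with x hx; rw [hx])
  have h2 : ∫ x, f x * log (f x) ∂μ = ∫ x, g x * log (g x) ∂μ :=
    integral_congr_ae (by filter_upwards [hfg] with x hx; rw [hx])
  have h3 : ∫ x, f x * (x ^ 2 / 2 - 1) ∂μ = ∫ x, g x * (x ^ 2 / 2 - 1) ∂μ :=
    integral_congr_ae (by filter_upwards [hfg] with x hx; rw [hx])
  have hmain := aux_main hμ hg_mono hg0 hgC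
  rw [entropy] at hmain ⊢
  rw [h1, h2, h3]
  exact hmain
end

section
/- Every complete Reinhardt closed set K ⊆ ℂⁿ supports the SC-inequality: for every cylinder C = {z ∈ ℂⁿ : |z₁| ≤ R} with ν_n(K) = ν_n(C), and every t ≥ 1, one has ν_n(tK) ≥ ν_n(tC). -/
open MeasureTheory Real Set
open scoped Pointwise

/-- The standard Gaussian measure `ν_n` on `ℂⁿ`, with density
`(2π)⁻ⁿ exp(-|z|²/2)` with respect to Lebesgue measure. -/
noncomputable def nuC (n : ℕ) : MeasureTheory.Measure (Fin n → ℂ) :=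
  MeasureTheory.volume.withDensity fun z =>
    ENNReal.ofReal (((2 * Real.pi) ^ n)⁻¹ * Real.exp (-(∑ k, ‖z k‖ ^ 2) / 2))

/-- The cylinder `{z ∈ ℂⁿ : |z₁| ≤ R}`. -/
def cylC {n : ℕ} (hn : 0 < n) (R : ℝ) : Set (Fin n → ℂ) :=
  {z | ‖z ⟨0, hn⟩‖ ≤ R}

/-- `K ⊆ ℂⁿ` supports the SC-inequality: for every cylinder `C` (with `R ≥ 0`) of
the same Gaussian measure and every `t ≥ 1`, one has `ν_n(tK) ≥ ν_n(tC)`. -/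
def SupportsSC {n : ℕ} (hn : 0 < n) (K : Set (Fin n → ℂ)) : Prop :=
  ∀ R : ℝ, 0 ≤ R → nuC n K = nuC n (cylC hn R) →
    ∀ t : ℝ, 1 ≤ t → nuC n (t • cylC hn R) ≤ nuC n (t • K)

open scoped ENNReal

namespace SCaux




lemma core_lemma (g : ℝ → ℝ) (hg : Monotone g) (h0 : ∀ x, 0 ≤ g x) (h1 : ∀ x, g x ≤ 1)
    (s : ℝ) (hs : 1 ≤ s) :
    ∫ u in Ioi (0:ℝ), exp (-u) * g (u / s) ^ s ≤ (∫ u in Ioi (0:ℝ), exp (-u) * g u) ^ s := by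
  have hs0 : (0:ℝ) < s := lt_of_lt_of_le one_pos hs
  -- the right-continuous modification G of g
  set G : ℝ → ℝ := fun v => sInf (g '' Ioi v) with hGdef
  have hne : ∀ v : ℝ, (g '' Ioi v).Nonempty := fun v => ⟨g (v+1), ⟨v+1, by simp, rfl⟩⟩
  have hbdd : ∀ v : ℝ, BddBelow (g '' Ioi v) := fun v =>
    ⟨0, by rintro y ⟨x, -, rfl⟩; exact h0 x⟩
  have hgG : ∀ v, g v ≤ G v := fun v =>
    le_csInf (hne v) (by rintro y ⟨x, hx, rfl⟩; exact hg (le_of_lt hx))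
  have hGle : ∀ v w, v < w → G v ≤ g w := fun v w hvw => csInf_le (hbdd v) ⟨w, hvw, rfl⟩
  have hG0 : ∀ v, 0 ≤ G v := fun v => le_trans (h0 v) (hgG v)
  have hG1 : ∀ v, G v ≤ 1 := fun v => le_trans (hGle v (v+1) (by linarith)) (h1 _)
  have hGmono : Monotone G := fun a b hab => le_csInf (hne b)
    (by rintro y ⟨x, hx, rfl⟩; exact csInf_le (hbdd a) ⟨x, lt_of_le_of_lt hab hx, rfl⟩)
  have hGtendsto : ∀ x : ℝ, Filter.Tendsto G (nhdsWithin x (Ioi x)) (nhds (G x)) := by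
    intro x
    have h := hGmono.tendsto_nhdsGT x
    have heq : sInf (G '' Ioi x) = G x := by
      apply le_antisymm
      · apply le_csInf (hne x)
        rintro y ⟨u, hu, rfl⟩
        obtain ⟨w, hw1, hw2⟩ := exists_between (mem_Ioi.1 hu)
        exact le_trans (csInf_le ⟨0, by rintro z ⟨a, -, rfl⟩; exact hG0 a⟩ ⟨w, hw1, rfl⟩)
          (hGle w u hw2)
      · exact le_csInf (nonempty_Ioi.image G)
          (by rintro y ⟨w, hw, rfl⟩; exact hGmono (le_of_lt hw))
    rwa [heq] at h
  have hGmeas : Measurable G := hGmono.measurable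
  -- g = G almost everywhere
  have hbad : {v : ℝ | g v ≠ G v}.Countable := by
    apply (hg.countable_not_continuousAt).mono
    intro v hv hc
    exact hv (tendsto_nhds_unique (hc.continuousWithinAt) (hg.tendsto_nhdsGT v))
  -- integrability of the basic integrand
  have hce : Continuous fun u : ℝ => exp (-u) := continuous_exp.comp continuous_neg
  have hmeas0 : Measurable fun u => exp (-u) * G u := hce.measurable.mul hGmeas
  have hbound : ∀ u : ℝ, ‖exp (-u) * G u‖ ≤ ‖exp (-u)‖ := by
    intro u
    simp only [norm_eq_abs, abs_mul, abs_of_nonneg (exp_nonneg _), abs_of_nonneg (hG0 u)]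
    exact mul_le_of_le_one_right (exp_nonneg _) (hG1 u)
  have hInt : ∀ a b : ℝ, IntervalIntegrable (fun u => exp (-u) * G u) volume a b := by
    intro a b
    exact IntervalIntegrable.mono_fun (hce.intervalIntegrable a b)
      hmeas0.aestronglyMeasurable (Filter.Eventually.of_forall hbound)
  set P : ℝ → ℝ := fun v => ∫ x in (0:ℝ)..v, exp (-x) * G x with hPdef
  set I' : ℝ := ∫ u in Ioi (0:ℝ), exp (-u) * G u with hI'def
  have hexpIoi : ∀ v : ℝ, IntegrableOn (fun u => exp (-u)) (Ioi v) volume := by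
    intro v; simpa using exp_neg_integrableOn_Ioi v one_pos
  have hIntIoi : ∀ v : ℝ, IntegrableOn (fun u => exp (-u) * G u) (Ioi v) volume := by
    intro v
    exact Integrable.mono (hexpIoi v) hmeas0.aestronglyMeasurable
      (Filter.Eventually.of_forall hbound)
  set W : ℝ → ℝ := fun v => I' - P v with hWdef
  have hW_tail : ∀ v : ℝ, 0 ≤ v → W v = ∫ u in Ioi v, exp (-u) * G u := by
    intro v hv
    have hunion : Ioc (0:ℝ) v ∪ Ioi v = Ioi 0 := Ioc_union_Ioi_eq_Ioi hv
    have hdisj : Disjoint (Ioc (0:ℝ) v) (Ioi v) := by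
      apply Set.disjoint_left.2; rintro x ⟨-, hx2⟩ hx3; exact absurd hx3 (not_lt.2 hx2)
    have := setIntegral_union hdisj measurableSet_Ioi
      ((hIntIoi 0).mono_set (by rw [← hunion]; exact subset_union_left))
      ((hIntIoi 0).mono_set (by rw [← hunion]; exact subset_union_right))
      (f := fun u => exp (-u) * G u) (μ := volume)
    rw [hunion] at this
    have hP : P v = ∫ u in Ioc (0:ℝ) v, exp (-u) * G u := intervalIntegral.integral_of_le hv
    simp only [hWdef, hI'def, this, hP]; ring
  have hW0 : ∀ v : ℝ, 0 ≤ v → 0 ≤ W v := by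
    intro v hv; rw [hW_tail v hv]
    exact setIntegral_nonneg measurableSet_Ioi fun u _ => mul_nonneg (exp_nonneg _) (hG0 u)
  have hWexp : ∀ v : ℝ, 0 ≤ v → W v ≤ exp (-v) := by
    intro v hv; rw [hW_tail v hv]
    calc ∫ u in Ioi v, exp (-u) * G u ≤ ∫ u in Ioi v, exp (-u) := by
          apply setIntegral_mono_on (hIntIoi v) (hexpIoi v) measurableSet_Ioi
          intro u _
          exact mul_le_of_le_one_right (exp_nonneg _) (hG1 u)
      _ = exp (-v) := integral_exp_neg_Ioi v
  have hW1 : ∀ v : ℝ, 0 ≤ v → W v ≤ 1 := fun v hv =>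
    le_trans (hWexp v hv) (exp_le_one_iff.2 (by linarith))
  have hkey : ∀ v : ℝ, 0 ≤ v → exp (-v) * G v ≤ W v := by
    intro v hv; rw [hW_tail v hv]
    calc exp (-v) * G v = ∫ u in Ioi v, exp (-u) * G v := by
          rw [integral_mul_const, integral_exp_neg_Ioi]
      _ ≤ ∫ u in Ioi v, exp (-u) * G u := by
          apply setIntegral_mono_on ((hexpIoi v).mul_const (G v)) (hIntIoi v) measurableSet_Ioi
          intro u hu
          exact mul_le_mul_of_nonneg_left (hGmono (le_of_lt hu)) (exp_nonneg _)
  -- FTC part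
  have hPderiv : ∀ x : ℝ, HasDerivWithinAt P (exp (-x) * G x) (Ici x) x := by
    intro x
    apply intervalIntegral.integral_hasDerivWithinAt_right (hInt 0 x)
      (((continuous_exp.comp continuous_neg).measurable.mul
        hGmeas).stronglyMeasurable.stronglyMeasurableAtFilter)
    exact ((continuous_exp.comp continuous_neg).continuousWithinAt).mul (hGtendsto x)
  have hWderiv : ∀ x : ℝ, HasDerivWithinAt W (-(exp (-x) * G x)) (Ici x) x := fun x =>
    (hPderiv x).const_sub I'
  set Φ : ℝ → ℝ := fun v => -(W (v / s) ^ s) with hΦdef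
  have hΦderiv : ∀ x : ℝ, HasDerivWithinAt Φ
      (W (x / s) ^ (s - 1) * (exp (-(x / s)) * G (x / s))) (Ici x) x := by
    intro x
    have hinner : HasDerivWithinAt (fun v : ℝ => v / s) (1 / s) (Ici x) x := by
      simpa using (hasDerivWithinAt_id x (Ici x)).div_const s
    have hmaps : MapsTo (fun v : ℝ => v / s) (Ici x) (Ici (x / s)) := by
      intro v hv
      simp only [mem_Ici] at hv ⊢
      exact (div_le_div_iff_of_pos_right hs0).2 hv
    have hcomp : HasDerivWithinAt (fun v => W (v / s)) (-(exp (-(x / s)) * G (x / s)) * (1 / s))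
        (Ici x) x := (hWderiv (x / s)).comp (h₂ := W) (h := fun v : ℝ => v / s) x hinner hmaps
    have := (hcomp.rpow_const (p := s) (Or.inr hs)).neg
    refine this.congr_deriv ?_
    have hs' : s * (1 / s) = 1 := mul_one_div_cancel (ne_of_gt hs0)
    linear_combination (W (x / s) ^ (s - 1) * (exp (-(x / s)) * G (x / s))) * hs'
  -- FTC-2 on [0, A]
  have hΦcont : Continuous Φ := by
    have hWc : Continuous W :=
      continuous_const.sub (intervalIntegral.continuous_primitive hInt 0)
    apply Continuous.neg
    apply Continuous.rpow_const (hWc.comp (continuous_id.div_const s))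
    intro x
    exact Or.inr (le_of_lt hs0)
  set ψ : ℝ → ℝ := fun u => W (u / s) ^ (s - 1) * (exp (-(u / s)) * G (u / s)) with hψdef
  have hWc : Continuous W :=
    continuous_const.sub (intervalIntegral.continuous_primitive hInt 0)
  have hrpow1 : Measurable fun x : ℝ => x ^ (s - 1) :=
    (Real.continuous_rpow_const (by linarith)).measurable
  have hrpows : Measurable fun x : ℝ => x ^ s :=
    (Real.continuous_rpow_const (le_of_lt hs0)).measurable
  have hψmeas : Measurable ψ := by
    apply Measurable.mul
    · exact hrpow1.comp (hWc.measurable.comp (measurable_id.div_const s))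
    · exact (hce.measurable.comp (measurable_id.div_const s)).mul
        (hGmeas.comp (measurable_id.div_const s))
  have hψbound : ∀ u : ℝ, 0 ≤ u → ‖ψ u‖ ≤ ‖(1:ℝ)‖ := by
    intro u hu
    have hus : 0 ≤ u / s := div_nonneg hu (le_of_lt hs0)
    have h1' : W (u / s) ^ (s - 1) ≤ 1 :=
      Real.rpow_le_one (hW0 _ hus) (hW1 _ hus) (by linarith)
    have h2' : exp (-(u / s)) * G (u / s) ≤ 1 := by
      calc exp (-(u / s)) * G (u / s) ≤ exp (-(u / s)) * 1 :=
            mul_le_mul_of_nonneg_left (hG1 _) (exp_nonneg _)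
        _ ≤ 1 := by rw [mul_one]; exact exp_le_one_iff.2 (by linarith)
    have h0' : 0 ≤ ψ u := mul_nonneg (Real.rpow_nonneg (hW0 _ hus) _)
      (mul_nonneg (exp_nonneg _) (hG0 _))
    simp only [norm_eq_abs, abs_of_nonneg h0', abs_one]
    calc ψ u ≤ 1 * (exp (-(u / s)) * G (u / s)) :=
          mul_le_mul_of_nonneg_right h1' (mul_nonneg (exp_nonneg _) (hG0 _))
      _ ≤ 1 := by rw [one_mul]; exact h2'
  have hψint : ∀ A : ℝ, 0 ≤ A → IntervalIntegrable ψ volume 0 A := by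
    intro A hA
    apply IntervalIntegrable.mono_fun (intervalIntegrable_const (c := (1:ℝ)))
      hψmeas.aestronglyMeasurable
    rw [Filter.EventuallyLE, ae_restrict_iff' measurableSet_uIoc]
    filter_upwards with u hu
    rw [Set.uIoc_of_le hA] at hu
    exact hψbound u (le_of_lt hu.1)
  have hFTC : ∀ A : ℝ, 0 ≤ A → ∫ u in (0:ℝ)..A, ψ u = Φ A - Φ 0 := by
    intro A hA
    exact intervalIntegral.integral_eq_sub_of_hasDeriv_right_of_le hA
      hΦcont.continuousOn
      (fun x hx => (hΦderiv x).mono (Ioi_subset_Ici le_rfl))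
      (hψint A hA)
  -- pointwise comparison on [0, A]
  have hptwise : ∀ u : ℝ, 0 ≤ u → exp (-u) * G (u / s) ^ s ≤ ψ u := by
    intro u hu
    set v := u / s with hvdef
    have hv : 0 ≤ v := div_nonneg hu (le_of_lt hs0)
    have hexp : exp (-u) = exp (-v) ^ s := by
      rw [← Real.exp_mul, hvdef]
      congr 1
      field_simp
    have ha : (0:ℝ) ≤ exp (-v) * G v := mul_nonneg (exp_nonneg _) (hG0 _)
    have hmain : (exp (-v) * G v) ^ s ≤ W v ^ (s - 1) * (exp (-v) * G v) := by
      rcases eq_or_lt_of_le ha with h | h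
      · rw [← h, Real.zero_rpow (ne_of_gt hs0), mul_zero]
      · calc (exp (-v) * G v) ^ s = (exp (-v) * G v) ^ (s - 1) * (exp (-v) * G v) := by
              rw [← Real.rpow_add_one (ne_of_gt h)]
              ring_nf
          _ ≤ W v ^ (s - 1) * (exp (-v) * G v) := by
              apply mul_le_mul_of_nonneg_right _ ha
              exact Real.rpow_le_rpow ha (hkey v hv) (by linarith)
    calc exp (-u) * G v ^ s = (exp (-v) * G v) ^ s := by
          rw [hexp, Real.mul_rpow (exp_nonneg _) (hG0 _)]
      _ ≤ W v ^ (s - 1) * (exp (-v) * G v) := hmain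
      _ = ψ u := rfl
  -- per-A bound
  have hae' : ∀ᵐ u : ℝ, g u = G u := by
    rw [ae_iff]
    simpa using hbad.measure_zero (volume : Measure ℝ)
  have hIeq : (∫ u in Ioi (0:ℝ), exp (-u) * g u) = I' := by
    apply setIntegral_congr_ae measurableSet_Ioi
    filter_upwards [hae'] with u hu _
    rw [hu]
  have hI'0 : 0 ≤ I' := setIntegral_nonneg measurableSet_Ioi fun u _ =>
    mul_nonneg (exp_nonneg _) (hG0 u)
  have hW0eq : W 0 = I' := by
    simp only [hWdef, hPdef, intervalIntegral.integral_same, sub_zero]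
  have hbad2 : volume {u : ℝ | g (u / s) ≠ G (u / s)} = 0 := by
    have hsub : {u : ℝ | g (u / s) ≠ G (u / s)} ⊆ (fun v => s * v) '' {v : ℝ | g v ≠ G v} := by
      intro u hu
      exact ⟨u / s, hu, by field_simp⟩
    exact measure_mono_null hsub ((hbad.image _).measure_zero volume)
  have hmainA : ∀ A : ℝ, 0 ≤ A → ∫ u in (0:ℝ)..A, exp (-u) * g (u / s) ^ s ≤ I' ^ s := by
    intro A hA
    have e1 : ∫ u in (0:ℝ)..A, exp (-u) * g (u / s) ^ s
        = ∫ u in (0:ℝ)..A, exp (-u) * G (u / s) ^ s := by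
      apply intervalIntegral.integral_congr_ae
      have : ∀ᵐ u : ℝ, g (u / s) = G (u / s) := by
        rw [ae_iff]
        simpa using hbad2
      filter_upwards [this] with u hu _
      rw [hu]
    have hInt2 : IntervalIntegrable (fun u => exp (-u) * G (u / s) ^ s) volume 0 A := by
      have hm2 : Measurable fun u : ℝ => exp (-u) * G (u / s) ^ s := by
        exact hce.measurable.mul (hrpows.comp (hGmeas.comp (measurable_id.div_const s)))
      apply IntervalIntegrable.mono_fun (intervalIntegrable_const (c := (1:ℝ)))
        hm2.aestronglyMeasurable
      rw [Filter.EventuallyLE, ae_restrict_iff' measurableSet_uIoc]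
      filter_upwards with u hu
      have hus : 0 ≤ u / s := by
        rw [Set.uIoc_of_le hA] at hu
        exact div_nonneg (le_of_lt hu.1) (le_of_lt hs0)
      have h0' : 0 ≤ exp (-u) * G (u / s) ^ s :=
        mul_nonneg (exp_nonneg _) (Real.rpow_nonneg (hG0 _) _)
      simp only [norm_eq_abs, abs_of_nonneg h0', abs_one]
      calc exp (-u) * G (u / s) ^ s ≤ 1 * 1 := by
            apply mul_le_mul (exp_le_one_iff.2 (by
              rw [Set.uIoc_of_le hA] at hu
              linarith [hu.1]))
              (Real.rpow_le_one (hG0 _) (hG1 _) (le_of_lt hs0))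
              (Real.rpow_nonneg (hG0 _) _) zero_le_one
        _ = 1 := by ring
    have e2 : ∫ u in (0:ℝ)..A, exp (-u) * G (u / s) ^ s ≤ ∫ u in (0:ℝ)..A, ψ u := by
      apply intervalIntegral.integral_mono_on hA hInt2 (hψint A hA)
      intro x hx
      exact hptwise x hx.1
    have e3 : ∫ u in (0:ℝ)..A, ψ u ≤ I' ^ s := by
      rw [hFTC A hA]
      have : Φ A - Φ 0 = W 0 ^ s - W (A / s) ^ s := by
        simp only [hΦdef, zero_div]
        ring
      rw [this, hW0eq]
      have : 0 ≤ W (A / s) ^ s := Real.rpow_nonneg (hW0 _ (div_nonneg hA (le_of_lt hs0))) _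
      linarith
    calc ∫ u in (0:ℝ)..A, exp (-u) * g (u / s) ^ s
        = ∫ u in (0:ℝ)..A, exp (-u) * G (u / s) ^ s := e1
      _ ≤ ∫ u in (0:ℝ)..A, ψ u := e2
      _ ≤ I' ^ s := e3
  -- limit A → ∞
  have hlhsint : IntegrableOn (fun u => exp (-u) * g (u / s) ^ s) (Ioi 0) volume := by
    have hm3 : Measurable fun u : ℝ => exp (-u) * g (u / s) ^ s := by
      exact hce.measurable.mul (hrpows.comp (hg.measurable.comp (measurable_id.div_const s)))
    apply Integrable.mono (hexpIoi 0) hm3.aestronglyMeasurable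
    filter_upwards with u
    have h0'' : 0 ≤ exp (-u) * g (u / s) ^ s :=
      mul_nonneg (exp_nonneg _) (Real.rpow_nonneg (h0 _) s)
    rw [norm_eq_abs, norm_eq_abs, abs_of_nonneg h0'', abs_of_nonneg (exp_nonneg _)]
    exact mul_le_of_le_one_right (exp_nonneg _)
      (Real.rpow_le_one (h0 _) (h1 _) (le_of_lt hs0))
  have hlim := intervalIntegral_tendsto_integral_Ioi (μ := volume)
    (b := fun A : ℝ => A) 0 hlhsint Filter.tendsto_id
  rw [hIeq]
  exact le_of_tendsto hlim (Filter.eventually_atTop.2 ⟨0, fun A hA => hmainA A hA⟩)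




lemma integrable_gauss_mul (φ : ℝ → ℝ) (hφm : Measurable φ) (hb : ∀ x, |φ x| ≤ 1) :
    Integrable (fun z : ℂ => (2 * π)⁻¹ * exp (-(‖z‖ ^ 2) / 2) * φ (‖z‖))
      volume := by
  have hgauss2 : Integrable (fun p : ℝ × ℝ => exp (-(p.1 ^ 2 + p.2 ^ 2) / 2)) volume := by
    have h1 : Integrable (fun x : ℝ => exp (-(1/2 : ℝ) * x ^ 2)) volume :=
      integrable_exp_neg_mul_sq (by norm_num)
    have := h1.mul_prod h1
    apply this.congr
    filter_upwards with p
    rw [← Real.exp_add]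
    congr 1
    ring
  have hgaussC : Integrable (fun z : ℂ => exp (-(‖z‖ ^ 2) / 2)) volume := by
    have hemb := Complex.measurableEquivRealProd.measurableEmbedding
    refine ((Complex.volume_preserving_equiv_real_prod.integrable_comp_emb hemb
      (g := fun p : ℝ × ℝ => exp (-(p.1 ^ 2 + p.2 ^ 2) / 2))).2 hgauss2).congr ?_
    filter_upwards with z
    show exp (-((Complex.measurableEquivRealProd z).1 ^ 2
      + (Complex.measurableEquivRealProd z).2 ^ 2) / 2) = _
    have h1 : (Complex.measurableEquivRealProd z) = (z.re, z.im) := rfl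
    rw [h1]
    congr 1
    rw [Complex.sq_norm, Complex.normSq_apply]
    ring
  have : Integrable (fun z : ℂ =>
      ((2 * π)⁻¹ * φ (‖z‖)) * exp (-(‖z‖ ^ 2) / 2)) volume := by
    apply hgaussC.bdd_mul (c := (2 * π)⁻¹)
    · exact (measurable_const.mul (hφm.comp continuous_norm.measurable)).aestronglyMeasurable
    · refine Filter.Eventually.of_forall (fun z => ?_)
      rw [norm_eq_abs, abs_mul]
      calc |(2 * π)⁻¹| * |φ (‖z‖)| ≤ |(2 * π)⁻¹| * 1 :=
            mul_le_mul_of_nonneg_left (hb _) (abs_nonneg _)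
        _ = (2 * π)⁻¹ := by
            rw [mul_one, abs_of_nonneg (by positivity)]
  apply this.congr
  filter_upwards with z
  ring

lemma gauss_radial (φ : ℝ → ℝ) (hφm : Measurable φ) (h0 : ∀ x, 0 ≤ φ x) (h1 : ∀ x, φ x ≤ 1) :
    ∫ z : ℂ, (2 * π)⁻¹ * exp (-(‖z‖ ^ 2) / 2) * φ (‖z‖)
      = ∫ u in Ioi (0:ℝ), exp (-u) * φ (Real.sqrt (2 * u)) := by
  have habs : ∀ x : ℝ, |φ x| ≤ 1 := fun x => abs_le.2 ⟨by linarith [h0 x], h1 x⟩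
  -- polar coordinates
  rw [← Complex.integral_comp_polarCoord_symm
    (fun z => (2 * π)⁻¹ * exp (-(‖z‖ ^ 2) / 2) * φ (‖z‖))]
  have htarget : polarCoord.target = Ioi (0:ℝ) ×ˢ Ioo (-π) π := rfl
  have hmeasT : MeasurableSet (Ioi (0:ℝ) ×ˢ Ioo (-π) π) :=
    measurableSet_Ioi.prod measurableSet_Ioo
  have hcongr : ∫ p in polarCoord.target,
      p.1 • ((2 * π)⁻¹ * exp (-(‖Complex.polarCoord.symm p‖ ^ 2) / 2)
        * φ (‖Complex.polarCoord.symm p‖))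
      = ∫ p in Ioi (0:ℝ) ×ˢ Ioo (-π) π,
        p.1 * ((2 * π)⁻¹ * exp (-(p.1 ^ 2) / 2) * φ p.1) := by
    rw [htarget]
    apply setIntegral_congr_fun hmeasT
    intro p hp
    have hp1 : 0 < p.1 := hp.1
    simp only [Complex.norm_polarCoord_symm, smul_eq_mul, abs_of_pos hp1]
  rw [hcongr]
  -- Fubini over the rectangle
  have hint1 : Integrable (fun r : ℝ => r * ((2 * π)⁻¹ * exp (-(r ^ 2) / 2) * φ r))
      (volume.restrict (Ioi (0:ℝ))) := by
    have hbase : IntegrableOn (fun r : ℝ => r * exp (-(1/2 : ℝ) * r ^ 2)) (Ioi 0) volume := by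
      have hb0 := integrableOn_rpow_mul_exp_neg_mul_sq (b := 1/2) (by norm_num)
        (s := 1) (by norm_num)
      apply hb0.congr_fun ?_ measurableSet_Ioi
      intro x hx
      simp [Real.rpow_one]
    apply Integrable.mono hbase
    · exact ((measurable_id.mul ((measurable_const.mul
        ((Real.continuous_exp.measurable).comp
          ((measurable_id.pow_const 2).neg.div_const 2))).mul hφm))).aestronglyMeasurable
    · rw [ae_restrict_iff' measurableSet_Ioi]
      filter_upwards with r hr
      have h2 : r * exp (-(1/2 : ℝ) * r ^ 2) = r * exp (-r ^ 2 / 2) := by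
        congr 2; ring
      have hA : |r * ((2 * π)⁻¹ * exp (-r ^ 2 / 2) * φ r)| ≤ |r| * exp (-r ^ 2 / 2) := by
        rw [abs_mul]
        apply mul_le_mul_of_nonneg_left _ (abs_nonneg r)
        rw [abs_mul, abs_mul, abs_of_nonneg (exp_nonneg _)]
        calc |(2 * π)⁻¹| * exp (-r ^ 2 / 2) * |φ r| ≤ 1 * exp (-r ^ 2 / 2) * 1 := by
              apply mul_le_mul _ (habs r) (abs_nonneg _) (by positivity)
              apply mul_le_mul _ le_rfl (exp_nonneg _) zero_le_one
              rw [abs_of_nonneg (by positivity : (0:ℝ) ≤ (2 * π)⁻¹)]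
              apply inv_le_one_of_one_le₀
              nlinarith [pi_gt_three]
          _ = exp (-r ^ 2 / 2) := by ring
      rw [norm_eq_abs, norm_eq_abs, h2, abs_mul r (exp (-r ^ 2 / 2)),
        abs_of_nonneg (exp_nonneg (-r ^ 2 / 2))]
      exact hA
  have hintprod : IntegrableOn (fun p : ℝ × ℝ => p.1 * ((2 * π)⁻¹ * exp (-(p.1 ^ 2) / 2) * φ p.1))
      (Ioi (0:ℝ) ×ˢ Ioo (-π) π) (volume.prod volume) := by
    rw [IntegrableOn, ← Measure.prod_restrict]
    have hconst : Integrable (fun _ : ℝ => (1:ℝ)) (volume.restrict (Ioo (-π) π)) := by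
      exact integrableOn_const (by rw [Real.volume_Ioo]; exact ENNReal.ofReal_ne_top)
    have := hint1.mul_prod hconst
    apply this.congr
    filter_upwards with p
    ring
  rw [show (volume : Measure (ℝ × ℝ)) = volume.prod volume from rfl]
  rw [setIntegral_prod _ hintprod]
  -- inner integral is constant
  have hinner : ∀ r : ℝ, ∫ _ in Ioo (-π) π, (r * ((2 * π)⁻¹ * exp (-(r ^ 2) / 2) * φ r))
      = (2 * π) * (r * ((2 * π)⁻¹ * exp (-(r ^ 2) / 2) * φ r)) := by
    intro r
    rw [setIntegral_const, measureReal_def, Real.volume_Ioo, smul_eq_mul]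
    congr 1
    rw [ENNReal.toReal_ofReal (by nlinarith [pi_gt_three])]
    ring
  simp only [hinner]
  have hsimp : ∀ r ∈ Ioi (0:ℝ), (2 * π) * (r * ((2 * π)⁻¹ * exp (-(r ^ 2) / 2) * φ r))
      = r * (exp (-(r ^ 2) / 2) * φ r) := by
    intro r _
    have hpi : (2 * π) ≠ 0 := by positivity
    field_simp
  rw [setIntegral_congr_fun measurableSet_Ioi hsimp]
  -- substitution u = r^2/2
  have himg : (fun r : ℝ => r ^ 2 / 2) '' Ioi 0 = Ioi (0:ℝ) := by
    ext u
    constructor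
    · rintro ⟨r, hr, rfl⟩
      exact div_pos (pow_pos (mem_Ioi.1 hr) 2) two_pos
    · intro hu
      have hu0 : (0:ℝ) < u := mem_Ioi.1 hu
      refine ⟨Real.sqrt (2 * u), Real.sqrt_pos.2 (by linarith), ?_⟩
      show Real.sqrt (2 * u) ^ 2 / 2 = u
      rw [Real.sq_sqrt (by linarith : (0:ℝ) ≤ 2 * u)]
      ring
  have hderiv : ∀ r ∈ Ioi (0:ℝ), HasDerivWithinAt (fun r : ℝ => r ^ 2 / 2) r (Ioi 0) r := by
    intro r _
    have := (hasDerivAt_pow 2 r).div_const 2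
    simp only [Nat.cast_ofNat, pow_one] at this
    exact this.hasDerivWithinAt.congr_deriv (by norm_num)
  have hinj : InjOn (fun r : ℝ => r ^ 2 / 2) (Ioi 0) := by
    intro a ha b hb hab
    simp only [mem_Ioi] at ha hb
    nlinarith [sq_nonneg (a - b), sq_nonneg (a + b)]
  have := integral_image_eq_integral_abs_deriv_smul measurableSet_Ioi hderiv hinj
    (fun u => exp (-u) * φ (Real.sqrt (2 * u)))
  rw [himg] at this
  rw [this]
  apply setIntegral_congr_fun measurableSet_Ioi
  intro r hr
  have hr0 : (0:ℝ) < r := hr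
  simp only [smul_eq_mul]
  rw [abs_of_pos hr0, show 2 * (r ^ 2 / 2) = r ^ 2 by ring,
    Real.sqrt_sq (le_of_lt hr0), show -(r ^ 2 / 2) = -r ^ 2 / 2 by ring]



noncomputable def Dens (n : ℕ) (z : Fin n → ℂ) : ℝ :=
  ((2 * π) ^ n)⁻¹ * exp (-(∑ k, ‖z k‖ ^ 2) / 2)

noncomputable def gdens (z : ℂ) : ℝ := (2 * π)⁻¹ * exp (-(‖z‖ ^ 2) / 2)

lemma Dens_nonneg (n : ℕ) (z : Fin n → ℂ) : 0 ≤ Dens n z := by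
  unfold Dens; positivity

lemma gdens_nonneg (z : ℂ) : 0 ≤ gdens z := by
  unfold gdens; positivity

lemma Dens_continuous (n : ℕ) : Continuous (Dens n) := by
  unfold Dens
  apply continuous_const.mul
  apply Real.continuous_exp.comp
  apply Continuous.div_const
  apply Continuous.neg
  apply continuous_finset_sum
  intro k _
  exact (continuous_norm.comp (continuous_apply k)).pow 2

lemma gdens_continuous : Continuous gdens := by
  unfold gdens
  apply continuous_const.mul
  exact Real.continuous_exp.comp ((continuous_norm.pow 2).neg.div_const 2)

lemma nuC_apply (n : ℕ) (S : Set (Fin n → ℂ)) (hS : MeasurableSet S) :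
    nuC n S = ∫⁻ z in S, ENNReal.ofReal (Dens n z) := by
  rw [nuC, withDensity_apply _ hS]
  rfl

lemma dens_split (n : ℕ) (z : ℂ) (w : Fin n → ℂ) :
    Dens (n + 1) (Fin.insertNth 0 z w) = gdens z * Dens n w := by
  unfold Dens gdens
  set q : Fin (n + 1) → ℂ := Fin.insertNth 0 z w with hq
  have hsum : (∑ k, ‖q k‖ ^ 2)
      = ‖z‖ ^ 2 + ∑ j, ‖w j‖ ^ 2 := by
    rw [Fin.sum_univ_succAbove (fun k => ‖q k‖ ^ 2) 0]
    simp [hq]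
  rw [hsum, pow_succ]
  rw [show -(‖z‖ ^ 2 + ∑ j, ‖w j‖ ^ 2) / 2
      = -(‖z‖ ^ 2) / 2 + -(∑ j, ‖w j‖ ^ 2) / 2 by ring,
    Real.exp_add, mul_inv]
  ring

/-- Fubini for `nuC` in the first coordinate. -/
lemma nuC_succ (n : ℕ) (S : Set (Fin (n + 1) → ℂ)) (hS : MeasurableSet S) :
    nuC (n + 1) S = ∫⁻ z : ℂ, ENNReal.ofReal (gdens z)
      * nuC n {w | Fin.insertNth 0 z w ∈ S} := by
  set e := MeasurableEquiv.piFinSuccAbove (fun _ : Fin (n + 1) => ℂ) 0 with he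
  have hMP : MeasurePreserving e volume volume :=
    volume_preserving_piFinSuccAbove (fun _ : Fin (n + 1) => ℂ) 0
  have hMPsymm : MeasurePreserving e.symm volume volume := hMP.symm e
  have hDmeas : Measurable fun x : Fin (n + 1) → ℂ => ENNReal.ofReal (Dens (n + 1) x) :=
    ENNReal.measurable_ofReal.comp (Dens_continuous (n + 1)).measurable
  have hsymm : ∀ p : ℂ × (Fin n → ℂ), e.symm p = Fin.insertNth 0 p.1 p.2 := fun p => rfl
  set T : Set (ℂ × (Fin n → ℂ)) := e.symm ⁻¹' S with hT
  have hTmeas : MeasurableSet T := e.symm.measurable hS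
  have hsec : ∀ z : ℂ, MeasurableSet {w : Fin n → ℂ | Fin.insertNth 0 z w ∈ S} := by
    intro z
    have : {w : Fin n → ℂ | Fin.insertNth 0 z w ∈ S} = Prod.mk z ⁻¹' T := by
      ext w; simp [hT, hsymm]
    rw [this]
    exact measurable_prodMk_left hTmeas
  calc nuC (n + 1) S = ∫⁻ x in S, ENNReal.ofReal (Dens (n + 1) x) := nuC_apply _ _ hS
    _ = ∫⁻ x, S.indicator (fun x => ENNReal.ofReal (Dens (n + 1) x)) x := by
        rw [lintegral_indicator hS]
    _ = ∫⁻ p : ℂ × (Fin n → ℂ),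
          S.indicator (fun x => ENNReal.ofReal (Dens (n + 1) x)) (e.symm p) := by
        rw [hMPsymm.lintegral_comp (hDmeas.indicator hS)]
    _ = ∫⁻ p : ℂ × (Fin n → ℂ),
          T.indicator (fun p : ℂ × (Fin n → ℂ) =>
            ENNReal.ofReal (gdens p.1) * ENNReal.ofReal (Dens n p.2)) p := by
        apply lintegral_congr
        intro p
        by_cases hp : p ∈ T
        · rw [indicator_of_mem hp, indicator_of_mem (by exact hp)]
          rw [hsymm p, dens_split, ENNReal.ofReal_mul (gdens_nonneg _)]
        · rw [indicator_of_notMem hp, indicator_of_notMem (by exact hp)]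
    _ = ∫⁻ z : ℂ, ∫⁻ w : Fin n → ℂ,
          T.indicator (fun p : ℂ × (Fin n → ℂ) =>
            ENNReal.ofReal (gdens p.1) * ENNReal.ofReal (Dens n p.2)) (z, w) := by
        rw [show (volume : Measure (ℂ × (Fin n → ℂ))) = volume.prod volume from rfl]
        apply lintegral_prod
        apply Measurable.aemeasurable
        apply Measurable.indicator _ hTmeas
        exact ((ENNReal.measurable_ofReal.comp gdens_continuous.measurable).comp
          measurable_fst).mul
          ((ENNReal.measurable_ofReal.comp (Dens_continuous n).measurable).comp measurable_snd)
    _ = ∫⁻ z : ℂ, ENNReal.ofReal (gdens z) * nuC n {w | Fin.insertNth 0 z w ∈ S} := by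
        apply lintegral_congr
        intro z
        have hind : ∀ w : Fin n → ℂ,
            T.indicator (fun p : ℂ × (Fin n → ℂ) =>
              ENNReal.ofReal (gdens p.1) * ENNReal.ofReal (Dens n p.2)) (z, w)
            = ENNReal.ofReal (gdens z)
              * ({w : Fin n → ℂ | Fin.insertNth 0 z w ∈ S}.indicator
                  (fun w => ENNReal.ofReal (Dens n w)) w) := by
          intro w
          by_cases hw : Fin.insertNth 0 z w ∈ S
          · rw [indicator_of_mem (by simpa [hT, hsymm] using hw),
              indicator_of_mem (by exact hw)]
          · rw [indicator_of_notMem (by simpa [hT, hsymm] using hw),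
              indicator_of_notMem (by exact hw), mul_zero]
        simp only [hind]
        have hmeasn : Measurable fun w : Fin n → ℂ => ENNReal.ofReal (Dens n w) :=
          ENNReal.measurable_ofReal.comp (Dens_continuous n).measurable
        rw [lintegral_const_mul _ (hmeasn.indicator (hsec z)),
          lintegral_indicator (hsec z), ← nuC_apply n _ (hsec z)]


lemma lintegral_gauss_phi (φ : ℝ → ℝ) (hφm : Measurable φ) (h0 : ∀ x, 0 ≤ φ x)
    (h1 : ∀ x, φ x ≤ 1) :
    ∫⁻ z : ℂ, ENNReal.ofReal (gdens z * φ (‖z‖))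
      = ENNReal.ofReal (∫ z : ℂ, gdens z * φ (‖z‖)) := by
  rw [← ofReal_integral_eq_lintegral_ofReal]
  · have := integrable_gauss_mul φ hφm (fun x => abs_le.2 ⟨by linarith [h0 x], h1 x⟩)
    simp only [gdens]
    exact this
  · filter_upwards with z
    exact mul_nonneg (gdens_nonneg z) (h0 _)

lemma lintegral_gdens_one : ∫⁻ z : ℂ, ENNReal.ofReal (gdens z) = 1 := by
  have h := lintegral_gauss_phi (fun _ => 1) measurable_const (fun _ => zero_le_one)
    (fun _ => le_rfl)
  simp only [mul_one] at h
  rw [h]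
  have h2 := gauss_radial (fun _ => 1) measurable_const (fun _ => zero_le_one) (fun _ => le_rfl)
  simp only [mul_one, gdens] at h2 ⊢
  rw [h2, integral_exp_neg_Ioi, neg_zero, Real.exp_zero, ENNReal.ofReal_one]

lemma nuC_univ (n : ℕ) : nuC n univ = 1 := by
  induction n with
  | zero =>
    rw [nuC_apply 0 univ MeasurableSet.univ]
    have h1 : ∀ z : Fin 0 → ℂ, ENNReal.ofReal (Dens 0 z) = 1 := by
      intro z
      simp [Dens]
    rw [setLIntegral_congr_fun MeasurableSet.univ (fun z _ => h1 z)]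
    simp only [Measure.restrict_univ, lintegral_one]
    have : (volume : Measure (Fin 0 → ℂ)) univ = 1 := by
      rw [show (volume : Measure (Fin 0 → ℂ)) = Measure.pi (fun _ => volume) from rfl,
        Measure.pi_univ]
      simp
    rw [this]
  | succ n ih =>
    rw [nuC_succ n univ MeasurableSet.univ]
    simp only [mem_univ, setOf_true, ih, mul_one]
    exact lintegral_gdens_one

instance nuC_prob (n : ℕ) : IsProbabilityMeasure (nuC n) := ⟨nuC_univ n⟩

lemma measurable_insertNth {n : ℕ} (z : ℂ) :
    Measurable fun w : Fin n → ℂ => Fin.insertNth (α := fun _ => ℂ) 0 z w := by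
  apply measurable_pi_iff.2
  intro k
  rcases eq_or_ne k 0 with rfl | hk
  · simp only [Fin.insertNth_apply_same]
    exact measurable_const
  · obtain ⟨j, rfl⟩ := Fin.exists_succAbove_eq hk
    simp only [Fin.insertNth_apply_succAbove]
    exact measurable_pi_apply j

lemma insertNth_abs_le {n : ℕ} {z z' : ℂ} {w w' : Fin n → ℂ}
    (hz : ‖z‖ ≤ ‖z'‖) (hw : ∀ j, ‖w j‖ ≤ ‖w' j‖) :
    ∀ k, ‖Fin.insertNth (α := fun _ => ℂ) 0 z w k‖
      ≤ ‖Fin.insertNth (α := fun _ => ℂ) 0 z' w' k‖ := by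
  intro k
  rcases eq_or_ne k 0 with rfl | hk
  · simpa [Fin.insertNth_apply_same] using hz
  · obtain ⟨j, rfl⟩ := Fin.exists_succAbove_eq hk
    simpa [Fin.insertNth_apply_succAbove] using hw j

lemma smul_insertNth {n : ℕ} (t : ℝ) (z : ℂ) (w : Fin n → ℂ) :
    t • Fin.insertNth (α := fun _ => ℂ) 0 z w = Fin.insertNth 0 (t • z) (t • w) := by
  funext k
  rcases eq_or_ne k 0 with rfl | hk
  · simp [Fin.insertNth_apply_same]
  · obtain ⟨j, rfl⟩ := Fin.exists_succAbove_eq hk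
    simp [Fin.insertNth_apply_succAbove]

/-- The radial inequality on `ℂ`, obtained from polar coordinates and the core lemma. -/
lemma radial_RL (g : ℝ → ℝ≥0∞) (hmono : Monotone g) (hle : ∀ v, g v ≤ 1)
    (s : ℝ) (hs : 1 ≤ s) :
    ∫⁻ z : ℂ, ENNReal.ofReal (gdens z) * g (‖z‖ ^ 2 / 2 / s) ^ s
      ≤ (∫⁻ z : ℂ, ENNReal.ofReal (gdens z) * g (‖z‖ ^ 2 / 2)) ^ s := by
  have hs0 : (0:ℝ) < s := lt_of_lt_of_le one_pos hs
  set φ : ℝ → ℝ := fun v => (g v).toReal with hφ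
  have hgtop : ∀ v, g v ≠ ⊤ := fun v => ne_top_of_le_ne_top ENNReal.one_ne_top (hle v)
  have hφmono : Monotone φ := fun a b hab => ENNReal.toReal_mono (hgtop b) (hmono hab)
  have hφ0 : ∀ v, 0 ≤ φ v := fun v => ENNReal.toReal_nonneg
  have hφ1 : ∀ v, φ v ≤ 1 := fun v => by
    have := ENNReal.toReal_mono ENNReal.one_ne_top (hle v)
    simpa using this
  have hφmeas : Measurable φ := hφmono.measurable
  have hgval : ∀ v, g v = ENNReal.ofReal (φ v) := fun v =>
    (ENNReal.ofReal_toReal (hgtop v)).symm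
  set ψ1 : ℝ → ℝ := fun r => φ (r ^ 2 / 2 / s) ^ s with hψ1
  set ψ0 : ℝ → ℝ := fun r => φ (r ^ 2 / 2) with hψ0
  have hψ1meas : Measurable ψ1 :=
    (Real.continuous_rpow_const (le_of_lt hs0)).measurable.comp
      (hφmeas.comp (((measurable_id.pow_const 2).div_const 2).div_const s))
  have hψ0meas : Measurable ψ0 := hφmeas.comp ((measurable_id.pow_const 2).div_const 2)
  have hψ10 : ∀ x, 0 ≤ ψ1 x := fun x => Real.rpow_nonneg (hφ0 _) _
  have hψ11 : ∀ x, ψ1 x ≤ 1 := fun x => Real.rpow_le_one (hφ0 _) (hφ1 _) (le_of_lt hs0)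
  have hψ00 : ∀ x, 0 ≤ ψ0 x := fun x => hφ0 _
  have hψ01 : ∀ x, ψ0 x ≤ 1 := fun x => hφ1 _
  have hLHS : ∫⁻ z : ℂ, ENNReal.ofReal (gdens z) * g (‖z‖ ^ 2 / 2 / s) ^ s
      = ENNReal.ofReal (∫ z : ℂ, gdens z * ψ1 (‖z‖)) := by
    rw [← lintegral_gauss_phi ψ1 hψ1meas hψ10 hψ11]
    apply lintegral_congr
    intro z
    rw [hgval (‖z‖ ^ 2 / 2 / s),
      ENNReal.ofReal_rpow_of_nonneg (hφ0 _) (le_of_lt hs0),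
      ← ENNReal.ofReal_mul (gdens_nonneg z)]
  have hRHS : ∫⁻ z : ℂ, ENNReal.ofReal (gdens z) * g (‖z‖ ^ 2 / 2)
      = ENNReal.ofReal (∫ z : ℂ, gdens z * ψ0 (‖z‖)) := by
    rw [← lintegral_gauss_phi ψ0 hψ0meas hψ00 hψ01]
    apply lintegral_congr
    intro z
    rw [hgval (‖z‖ ^ 2 / 2), ← ENNReal.ofReal_mul (gdens_nonneg z)]
  rw [hLHS, hRHS]
  have hgr1 : ∫ z : ℂ, gdens z * ψ1 (‖z‖)
      = ∫ u in Ioi (0:ℝ), exp (-u) * φ (u / s) ^ s := by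
    have h := gauss_radial ψ1 hψ1meas hψ10 hψ11
    simp only [gdens] at h ⊢
    rw [h]
    apply setIntegral_congr_fun measurableSet_Ioi
    intro u hu
    have h2u : Real.sqrt (2 * u) ^ 2 = 2 * u := Real.sq_sqrt (by linarith [mem_Ioi.1 hu])
    simp only [hψ1]
    rw [h2u, show 2 * u / 2 / s = u / s by ring]
  have hgr0 : ∫ z : ℂ, gdens z * ψ0 (‖z‖)
      = ∫ u in Ioi (0:ℝ), exp (-u) * φ u := by
    have h := gauss_radial ψ0 hψ0meas hψ00 hψ01
    simp only [gdens] at h ⊢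
    rw [h]
    apply setIntegral_congr_fun measurableSet_Ioi
    intro u hu
    have h2u : Real.sqrt (2 * u) ^ 2 = 2 * u := Real.sq_sqrt (by linarith [mem_Ioi.1 hu])
    simp only [hψ0]
    rw [h2u, show 2 * u / 2 = u by ring]
  rw [hgr1, hgr0]
  have hIpos : 0 ≤ ∫ u in Ioi (0:ℝ), exp (-u) * φ u :=
    setIntegral_nonneg measurableSet_Ioi fun u _ => mul_nonneg (exp_nonneg _) (hφ0 _)
  rw [ENNReal.ofReal_rpow_of_nonneg hIpos (le_of_lt hs0)]
  exact ENNReal.ofReal_le_ofReal (core_lemma φ hφmono hφ0 hφ1 s hs)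

/-- The master inequality: for measurable "moduli-upward" sets `B`,
`ν(tB) ≤ ν(B)^{t²}`. -/
lemma master (n : ℕ) (B : Set (Fin n → ℂ)) (hB : MeasurableSet B)
    (hup : ∀ z ∈ B, ∀ w : Fin n → ℂ,
      (∀ k, ‖z k‖ ≤ ‖w k‖) → w ∈ B)
    (t : ℝ) (ht : 1 ≤ t) : nuC n (t • B) ≤ nuC n B ^ (t ^ 2) := by
  induction n with
  | zero =>
    rcases Set.eq_empty_or_nonempty B with rfl | hne
    · rw [Set.smul_set_empty]
      simp
    · have hBuniv : B = univ := by
        apply Set.eq_univ_of_forall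
        intro x
        obtain ⟨y, hy⟩ := hne
        rwa [Subsingleton.elim x y]
      have ht0 : t ≠ 0 := by positivity
      rw [hBuniv]
      have huniv : t • (univ : Set (Fin 0 → ℂ)) = univ := by
        apply Set.eq_univ_of_forall
        intro x
        exact ⟨t⁻¹ • x, trivial, Subsingleton.elim _ _⟩
      rw [huniv, nuC_univ, ENNReal.one_rpow]
  | succ n ih =>
    have ht0 : (0:ℝ) < t := lt_of_lt_of_le one_pos ht
    set sec : ℂ → Set (Fin n → ℂ) := fun z => {w | Fin.insertNth 0 z w ∈ B} with hsecdef
    have hsecmeas : ∀ z, MeasurableSet (sec z) := fun z => hB.preimage (measurable_insertNth z)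
    have hsecup : ∀ z, ∀ w ∈ sec z, ∀ w' : Fin n → ℂ,
        (∀ k, ‖w k‖ ≤ ‖w' k‖) → w' ∈ sec z := by
      intro z w hw w' hww'
      exact hup _ hw _ (insertNth_abs_le le_rfl hww')
    have hsecmono : ∀ z z' : ℂ, ‖z‖ ≤ ‖z'‖ → sec z ⊆ sec z' := by
      intro z z' h w hw
      exact hup _ hw _ (insertNth_abs_le h fun j => le_rfl)
    have hseceq : ∀ z z' : ℂ, ‖z‖ = ‖z'‖ → sec z = sec z' :=
      fun z z' h => Subset.antisymm (hsecmono _ _ h.le) (hsecmono _ _ h.ge)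
    have hsec_smul : ∀ z : ℂ,
        {w : Fin n → ℂ | Fin.insertNth 0 z w ∈ t • B} = t • sec (t⁻¹ • z) := by
      intro z
      ext w
      rw [mem_setOf_eq, mem_smul_set_iff_inv_smul_mem₀ (ne_of_gt ht0) B,
        mem_smul_set_iff_inv_smul_mem₀ (ne_of_gt ht0) (sec (t⁻¹ • z)) w, smul_insertNth]
      rfl
    -- the monotone radial profile
    set g : ℝ → ℝ≥0∞ := fun v => nuC n (sec ((Real.sqrt (2 * v) : ℝ) : ℂ)) with hgdef
    have habs_coe : ∀ x : ℝ, 0 ≤ x → ‖((x : ℝ) : ℂ)‖ = x := by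
      intro x hx
      rw [Complex.norm_real, Real.norm_eq_abs, abs_of_nonneg hx]
    have hgmono : Monotone g := by
      intro a b hab
      apply measure_mono
      apply hsecmono
      rw [habs_coe _ (Real.sqrt_nonneg _), habs_coe _ (Real.sqrt_nonneg _)]
      exact Real.sqrt_le_sqrt (by linarith)
    have hgle : ∀ v, g v ≤ 1 := fun v => prob_le_one
    have hg_at : ∀ z : ℂ, nuC n (sec z) = g (‖z‖ ^ 2 / 2) := by
      intro z
      simp only [hgdef]
      congr 1
      apply hseceq
      rw [habs_coe _ (Real.sqrt_nonneg _), show 2 * (‖z‖ ^ 2 / 2)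
        = ‖z‖ ^ 2 by ring, Real.sqrt_sq (norm_nonneg z)]
    have hBsmul : MeasurableSet (t • B) := hB.const_smul₀ t
    have hts : (1:ℝ) ≤ t ^ 2 := by nlinarith
    calc nuC (n + 1) (t • B)
        = ∫⁻ z : ℂ, ENNReal.ofReal (gdens z)
            * nuC n {w | Fin.insertNth 0 z w ∈ t • B} := nuC_succ n _ hBsmul
      _ = ∫⁻ z : ℂ, ENNReal.ofReal (gdens z) * nuC n (t • sec (t⁻¹ • z)) := by
          apply lintegral_congr
          intro z
          rw [hsec_smul z]
      _ ≤ ∫⁻ z : ℂ, ENNReal.ofReal (gdens z)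
            * g (‖z‖ ^ 2 / 2 / t ^ 2) ^ (t ^ 2 : ℝ) := by
          apply lintegral_mono
          intro z
          apply mul_le_mul_right
          have h1 := ih (sec (t⁻¹ • z)) (hsecmeas _) (hsecup _) 
          have h2 : nuC n (sec (t⁻¹ • z)) = g (‖z‖ ^ 2 / 2 / t ^ 2) := by
            have habssmul : ‖t⁻¹ • z‖ = t⁻¹ * ‖z‖ := by
              rw [norm_smul,
                Real.norm_eq_abs, abs_of_nonneg (inv_nonneg.2 (le_of_lt ht0))]
            have harg : ‖t⁻¹ • z‖ ^ 2 / 2 = ‖z‖ ^ 2 / 2 / t ^ 2 := by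
              rw [habssmul]
              ring
            rw [hg_at (t⁻¹ • z), harg]
          rw [← h2]
          exact h1
      _ ≤ (∫⁻ z : ℂ, ENNReal.ofReal (gdens z)
            * g (‖z‖ ^ 2 / 2)) ^ (t ^ 2 : ℝ) :=
          radial_RL g hgmono hgle (t ^ 2) hts
      _ = nuC (n + 1) B ^ (t ^ 2 : ℝ) := by
          congr 1
          rw [nuC_succ n B hB]
          apply lintegral_congr
          intro z
          rw [hg_at z]

end SCaux
namespace SCaux

lemma cyl_compl_measure (m : ℕ) (R : ℝ) (hR : 0 ≤ R) :
    nuC (m + 1) {z : Fin (m + 1) → ℂ | R < ‖z 0‖}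
      = ENNReal.ofReal (exp (-R ^ 2 / 2)) := by
  have hmeas : MeasurableSet {z : Fin (m + 1) → ℂ | R < ‖z 0‖} := by
    have : {z : Fin (m + 1) → ℂ | R < ‖z 0‖}
        = (fun z : Fin (m + 1) → ℂ => ‖z 0‖) ⁻¹' (Ioi R) := rfl
    rw [this]
    exact measurableSet_Ioi.preimage
      (continuous_norm.measurable.comp (measurable_pi_apply 0))
  rw [nuC_succ m _ hmeas]
  set φ : ℝ → ℝ := fun r => if R < r then (1:ℝ) else 0 with hφ
  have hφmeas : Measurable φ := by
    apply Measurable.ite _ measurable_const measurable_const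
    exact measurableSet_Ioi
  have hφ0 : ∀ x, 0 ≤ φ x := by
    intro x; simp only [hφ]; split_ifs <;> norm_num
  have hφ1 : ∀ x, φ x ≤ 1 := by
    intro x; simp only [hφ]; split_ifs <;> norm_num
  have hsec : ∀ z : ℂ, nuC m {w : Fin m → ℂ |
      Fin.insertNth 0 z w ∈ {z : Fin (m + 1) → ℂ | R < ‖z 0‖}}
      = ENNReal.ofReal (φ (‖z‖)) := by
    intro z
    have h0 : ∀ w : Fin m → ℂ, (Fin.insertNth (α := fun _ => ℂ) 0 z w) 0 = z :=
      fun w => by simp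
    by_cases h : R < ‖z‖
    · have heq : {w : Fin m → ℂ |
          Fin.insertNth 0 z w ∈ {z : Fin (m + 1) → ℂ | R < ‖z 0‖}} = univ := by
        apply eq_univ_of_forall
        intro w
        simp only [mem_setOf_eq, h0 w]
        exact h
      rw [heq, nuC_univ]
      simp [hφ, h]
    · have heq : {w : Fin m → ℂ |
          Fin.insertNth 0 z w ∈ {z : Fin (m + 1) → ℂ | R < ‖z 0‖}} = ∅ := by
        apply eq_empty_iff_forall_notMem.2
        intro w hw
        simp only [mem_setOf_eq, h0 w] at hw
        exact h hw
      rw [heq]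
      simp [hφ, h]
  calc ∫⁻ z : ℂ, ENNReal.ofReal (gdens z) * nuC m {w : Fin m → ℂ |
        Fin.insertNth 0 z w ∈ {z : Fin (m + 1) → ℂ | R < ‖z 0‖}}
      = ∫⁻ z : ℂ, ENNReal.ofReal (gdens z * φ (‖z‖)) := by
        apply lintegral_congr
        intro z
        rw [hsec z, ← ENNReal.ofReal_mul (gdens_nonneg z)]
    _ = ENNReal.ofReal (∫ z : ℂ, gdens z * φ (‖z‖)) :=
        lintegral_gauss_phi φ hφmeas hφ0 hφ1
    _ = ENNReal.ofReal (∫ u in Ioi (0:ℝ), exp (-u) * φ (Real.sqrt (2 * u))) := by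
        congr 1
        have h := gauss_radial φ hφmeas hφ0 hφ1
        simp only [gdens]
        exact h
    _ = ENNReal.ofReal (exp (-R ^ 2 / 2)) := by
        congr 1
        have hcong : ∀ u ∈ Ioi (0:ℝ), exp (-u) * φ (Real.sqrt (2 * u))
            = (Ioi (R ^ 2 / 2)).indicator (fun u => exp (-u)) u := by
          intro u hu
          have hu0 : (0:ℝ) < u := hu
          by_cases h : R ^ 2 / 2 < u
          · have h' : R < Real.sqrt (2 * u) := by
              rw [show R = Real.sqrt (R ^ 2) from (Real.sqrt_sq hR).symm]
              apply Real.sqrt_lt_sqrt (by positivity)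
              linarith
            rw [Set.indicator_of_mem (mem_Ioi.2 h) (fun u => exp (-u))]
            simp only [hφ]
            rw [if_pos h', mul_one]
          · push_neg at h
            have h' : ¬ R < Real.sqrt (2 * u) := by
              push_neg
              rw [show R = Real.sqrt (R ^ 2) from (Real.sqrt_sq hR).symm]
              apply Real.sqrt_le_sqrt
              linarith
            have hnm : u ∉ Ioi (R ^ 2 / 2) := by
              simp only [mem_Ioi, not_lt]
              exact h
            rw [Set.indicator_of_notMem hnm (fun u => exp (-u))]
            simp only [hφ]
            rw [if_neg h', mul_zero]
        rw [setIntegral_congr_fun measurableSet_Ioi hcong,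
          setIntegral_indicator measurableSet_Ioi]
        have hmax : max (0:ℝ) (R ^ 2 / 2) = R ^ 2 / 2 :=
          max_eq_right (by positivity)
        have hinter : Ioi (0:ℝ) ∩ Ioi (R ^ 2 / 2) = Ioi (R ^ 2 / 2) := by
          rw [Set.Ioi_inter_Ioi, hmax]
        rw [hinter, integral_exp_neg_Ioi]
        congr 1
        ring

end SCaux

open SCaux in
/-- **Main theorem.** Every complete Reinhardt closed set `K ⊆ ℂⁿ`
supports the SC-inequality. -/
theorem reinhardt_supportsSC
    (n : ℕ) (hn : 0 < n) (K : Set (Fin n → ℂ)) (hK_closed : IsClosed K)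
    (hK_reinhardt : ∀ z ∈ K, ∀ w : Fin n → ℂ,
      (∀ k, ‖w k‖ ≤ ‖z k‖) → w ∈ K) :
    SupportsSC hn K := by
  intro R hR hKC t ht
  have hmn : ∃ m, n = m + 1 := ⟨n - 1, (Nat.succ_pred_eq_of_pos hn).symm⟩
  obtain ⟨m, rfl⟩ := hmn
  have ht0 : (0:ℝ) < t := lt_of_lt_of_le one_pos ht
  have htne : t ≠ 0 := ne_of_gt ht0
  have hzero : (⟨0, hn⟩ : Fin (m + 1)) = 0 := rfl
  have hKmeas : MeasurableSet K := hK_closed.measurableSet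
  have hcylmeas : ∀ R' : ℝ, MeasurableSet (cylC hn R') := by
    intro R'
    have : cylC hn R' = (fun z : Fin (m + 1) → ℂ => ‖z ⟨0, hn⟩‖) ⁻¹' (Iic R') := rfl
    rw [this]
    exact measurableSet_Iic.preimage
      (continuous_norm.measurable.comp (measurable_pi_apply _))
  have hcyl_compl : ∀ R' : ℝ,
      (cylC hn R')ᶜ = {z : Fin (m + 1) → ℂ | R' < ‖z 0‖} := by
    intro R'
    ext z
    simp [cylC, hzero, not_le]
  have hcylval : ∀ R' : ℝ, 0 ≤ R' →
      nuC (m + 1) ((cylC hn R')ᶜ) = ENNReal.ofReal (exp (-R' ^ 2 / 2)) := by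
    intro R' hR'
    rw [hcyl_compl R']
    exact cyl_compl_measure m R' hR'
  have hKc : nuC (m + 1) Kᶜ = ENNReal.ofReal (exp (-R ^ 2 / 2)) := by
    rw [prob_compl_eq_one_sub hKmeas, hKC, ← prob_compl_eq_one_sub (hcylmeas R),
      hcylval R hR]
  have hup : ∀ z ∈ Kᶜ, ∀ w : Fin (m + 1) → ℂ,
      (∀ k, ‖z k‖ ≤ ‖w k‖) → w ∈ Kᶜ := by
    intro z hz w hzw hw
    exact hz (hK_reinhardt w hw z hzw)
  have hmaster := master (m + 1) Kᶜ hKmeas.compl hup t ht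
  rw [hKc] at hmaster
  have hofreal : ENNReal.ofReal (exp (-R ^ 2 / 2)) ^ (t ^ 2 : ℝ)
      = ENNReal.ofReal (exp (-(t * R) ^ 2 / 2)) := by
    rw [ENNReal.ofReal_rpow_of_nonneg (exp_nonneg _) (by positivity)]
    congr 1
    rw [← Real.exp_mul]
    congr 1
    ring
  rw [hofreal] at hmaster
  have hcompl_smul : ∀ S : Set (Fin (m + 1) → ℂ), (t • S)ᶜ = t • Sᶜ := by
    intro S
    ext z
    rw [mem_compl_iff, mem_smul_set_iff_inv_smul_mem₀ htne,
      mem_smul_set_iff_inv_smul_mem₀ htne, mem_compl_iff]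
  have hcylsmul : t • cylC hn R = cylC hn (t * R) := by
    ext z
    rw [mem_smul_set_iff_inv_smul_mem₀ htne]
    show ‖(t⁻¹ • z) ⟨0, hn⟩‖ ≤ R ↔ ‖z ⟨0, hn⟩‖ ≤ t * R
    have happ : (t⁻¹ • z) ⟨0, hn⟩ = t⁻¹ • (z ⟨0, hn⟩) := rfl
    rw [happ, norm_smul, Real.norm_eq_abs,
      abs_of_nonneg (inv_nonneg.2 (le_of_lt ht0))]
    rw [inv_mul_le_iff₀ ht0]
  have hsmulKmeas : MeasurableSet (t • K) := hKmeas.const_smul₀ t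
  have h1 : nuC (m + 1) (t • cylC hn R) = 1 - ENNReal.ofReal (exp (-(t * R) ^ 2 / 2)) := by
    rw [hcylsmul]
    conv_lhs => rw [← compl_compl (cylC hn (t * R))]
    rw [prob_compl_eq_one_sub (hcylmeas (t * R)).compl,
      hcylval (t * R) (mul_nonneg (le_of_lt ht0) hR)]
  have h3 : nuC (m + 1) (t • K) = 1 - nuC (m + 1) (t • Kᶜ) := by
    conv_lhs => rw [← compl_compl (t • K)]
    rw [prob_compl_eq_one_sub hsmulKmeas.compl, hcompl_smul]
  rw [h1, h3]
  exact tsub_le_tsub_left hmaster 1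
end

section
/- For every closed set A ⊆ ℂⁿ such that ∫_A |z|² dν_n(z) < ∞, the function t ↦ ν_n(tA) is differentiable at t = 1 and (d/dt) ν_n(tA)|_{t=1} = 2n·ν_n(A) − ∫_A |z|² dν_n(z). -/
open MeasureTheory Real Set
open scoped Pointwise

lemma gaussC_integrable {a : ℝ} (ha : 0 < a) :
    Integrable (fun z : ℂ => Real.exp (-(a * ‖z‖ ^ 2))) := by
  have h := Complex.volume_preserving_equiv_real_prod.symm
  rw [← h.integrable_comp_emb (MeasurableEquiv.measurableEmbedding _)]
  have heq : (fun z : ℂ => Real.exp (-(a * ‖z‖ ^ 2))) ∘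
      Complex.measurableEquivRealProd.symm
      = fun p : ℝ × ℝ => Real.exp (-a * p.1 ^ 2) * Real.exp (-a * p.2 ^ 2) := by
    ext p
    simp only [Function.comp_apply, ← Real.exp_add]
    congr 1
    rw [Complex.sq_norm]
    have : (Complex.measurableEquivRealProd.symm p : ℂ) = Complex.mk p.1 p.2 := rfl
    rw [this]
    simp [Complex.normSq_mk]
    ring
  rw [heq]
  exact (integrable_exp_neg_mul_sq ha).mul_prod (integrable_exp_neg_mul_sq ha)

lemma gauss_integrable (n : ℕ) {a : ℝ} (ha : 0 < a) :
    Integrable (fun z : Fin n → ℂ => Real.exp (-(a * ∑ k, ‖z k‖ ^ 2))) := by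
  have heq : (fun z : Fin n → ℂ => Real.exp (-(a * ∑ k, ‖z k‖ ^ 2)))
      = fun z => ∏ k, Real.exp (-(a * ‖z k‖ ^ 2)) := by
    ext z
    rw [← Real.exp_sum, Finset.mul_sum, ← Finset.sum_neg_distrib]
  rw [heq]
  exact Integrable.fintype_prod fun _ => gaussC_integrable ha

lemma gauss_integrable' (n : ℕ) {a : ℝ} (ha : 0 < a) (c : ℝ) :
    Integrable (fun z : Fin n → ℂ => c * Real.exp (-(a * ∑ k, ‖z k‖ ^ 2))) :=
  (gauss_integrable n ha).const_mul c

lemma frankC (n : ℕ) : Module.finrank ℝ (Fin n → ℂ) = 2 * n := by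
  simp [Module.finrank_pi_fintype, Complex.finrank_real_complex, Finset.sum_const, mul_comm]

lemma cont_x (n : ℕ) : Continuous (fun z : Fin n → ℂ => ∑ k, ‖z k‖ ^ 2) := by
  exact continuous_finset_sum _ fun k _ =>
    (continuous_norm.comp (continuous_apply k)).pow 2

lemma nuC_toReal (n : ℕ) {S : Set (Fin n → ℂ)} (hS : MeasurableSet S) :
    (nuC n S).toReal
      = ∫ z in S, ((2 * π) ^ n)⁻¹ * Real.exp (-(∑ k, ‖z k‖ ^ 2) / 2) := by
  rw [nuC, withDensity_apply _ hS]
  have hf : IntegrableOn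
      (fun z : Fin n → ℂ => ((2 * π) ^ n)⁻¹ * Real.exp (-(∑ k, ‖z k‖ ^ 2) / 2))
      S volume := by
    have : (fun z : Fin n → ℂ => ((2 * π) ^ n)⁻¹ * Real.exp (-(∑ k, ‖z k‖ ^ 2) / 2))
        = fun z => ((2 * π) ^ n)⁻¹ *
          Real.exp (-((1/2 : ℝ) * ∑ k, ‖z k‖ ^ 2)) := by
      ext z; ring_nf
    rw [this]
    exact (gauss_integrable' n (by norm_num) _).integrableOn
  rw [← ofReal_integral_eq_lintegral_ofReal hf
    (Filter.Eventually.of_forall fun z => by positivity),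
    ENNReal.toReal_ofReal (integral_nonneg fun z => by positivity)]

lemma nuC_setIntegral (n : ℕ) {S : Set (Fin n → ℂ)} (hS : MeasurableSet S)
    (g : (Fin n → ℂ) → ℝ) :
    ∫ z in S, g z ∂(nuC n)
      = ∫ z in S, (((2 * π) ^ n)⁻¹ * Real.exp (-(∑ k, ‖z k‖ ^ 2) / 2)) * g z := by
  rw [nuC]
  have hm : Measurable (fun z : Fin n → ℂ =>
      (((2 * π) ^ n)⁻¹ * Real.exp (-(∑ k, ‖z k‖ ^ 2) / 2)).toNNReal) := by
    exact (continuous_const.mul ((cont_x n).neg.div_const 2).rexp).measurable.real_toNNReal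
  have : (fun z : Fin n → ℂ =>
      ENNReal.ofReal (((2 * π) ^ n)⁻¹ * Real.exp (-(∑ k, ‖z k‖ ^ 2) / 2)))
      = fun z => ((((2 * π) ^ n)⁻¹
        * Real.exp (-(∑ k, ‖z k‖ ^ 2) / 2)).toNNReal : ENNReal) := rfl
  rw [this, setIntegral_withDensity_eq_setIntegral_smul hm g hS]
  apply setIntegral_congr_fun hS
  intro z _
  show _ • _ = _
  rw [NNReal.smul_def, Real.coe_toNNReal _ (by positivity), smul_eq_mul]

lemma x_smul (n : ℕ) (t : ℝ) (z : Fin n → ℂ) :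
    ∑ k, ‖(t • z) k‖ ^ 2 = t ^ 2 * ∑ k, ‖z k‖ ^ 2 := by
  rw [Finset.mul_sum]
  refine Finset.sum_congr rfl fun k _ => ?_
  rw [Pi.smul_apply, norm_smul]
  rw [Real.norm_eq_abs, mul_pow, sq_abs]

lemma nuC_smul (n : ℕ) {A : Set (Fin n → ℂ)} (hA : IsClosed A) {t : ℝ} (ht : 0 < t) :
    (nuC n (t • A)).toReal
      = t ^ (2 * n) * ∫ z in A, ((2 * π) ^ n)⁻¹ *
          Real.exp (-(t ^ 2 * ∑ k, ‖z k‖ ^ 2) / 2) := by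
  have hSA : MeasurableSet (t • A) := (hA.smul_of_ne_zero ht.ne').measurableSet
  rw [nuC_toReal n hSA]
  have h := Measure.setIntegral_comp_smul_of_pos volume
    (fun z : Fin n → ℂ => ((2 * π) ^ n)⁻¹ * Real.exp (-(∑ k, ‖z k‖ ^ 2) / 2)) A ht
  rw [frankC] at h
  simp only [x_smul, smul_eq_mul] at h
  rw [h]
  have hpow : (0:ℝ) < t ^ (2 * n) := pow_pos ht _
  field_simp

/-- For a closed set `A ⊆ ℂⁿ` with `∫_A |z|² dν_n < ∞`, the function
`t ↦ ν_n(tA)` is differentiable at `t = 1` with derivative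
`2n·ν_n(A) - ∫_A |z|² dν_n(z)`. -/
theorem hasDerivAt_gaussian_dilation
    (n : ℕ) (A : Set (Fin n → ℂ)) (hA_closed : IsClosed A)
    (hint : IntegrableOn (fun z => ∑ k, ‖z k‖ ^ 2) A (nuC n)) :
    HasDerivAt (fun t : ℝ => (nuC n (t • A)).toReal)
      (2 * n * (nuC n A).toReal - ∫ z in A, ∑ k, ‖z k‖ ^ 2 ∂(nuC n))
      1 := by
  classical
  set c : ℝ := ((2 * π) ^ n)⁻¹ with hc
  have hc0 : 0 ≤ c := by positivity
  set X : (Fin n → ℂ) → ℝ := fun z => ∑ k, ‖z k‖ ^ 2 with hX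
  have hX0 : ∀ z, 0 ≤ X z := fun z => Finset.sum_nonneg fun k _ => by positivity
  have hAm : MeasurableSet A := hA_closed.measurableSet
  set μ := volume.restrict A with hμ
  set F : ℝ → (Fin n → ℂ) → ℝ := fun t z => c * Real.exp (-(t ^ 2 * X z) / 2) with hF
  set F' : ℝ → (Fin n → ℂ) → ℝ := fun t z =>
    c * (Real.exp (-(t ^ 2 * X z) / 2) * (-(2 * t * X z) / 2)) with hF'
  have hderiv : ∀ z, ∀ t : ℝ, HasDerivAt (fun s => F s z) (F' t z) t := by
    intro z t
    have h1 : HasDerivAt (fun s : ℝ => -(s ^ 2 * X z) / 2) (-(2 * t * X z) / 2) t := by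
      have := ((hasDerivAt_pow 2 t).mul_const (X z)).neg.div_const 2
      simpa using this
    exact h1.exp.const_mul c
  have hcontF : ∀ t : ℝ, Continuous (F t) := fun t =>
    continuous_const.mul (((continuous_const.mul (cont_x n)).neg.div_const 2).rexp)
  have hcontF' : ∀ t : ℝ, Continuous (F' t) := fun t =>
    continuous_const.mul
      ((((continuous_const.mul (cont_x n)).neg.div_const 2).rexp).mul
        (((continuous_const.mul (cont_x n)).neg.div_const 2)))
  have hF_meas : ∀ᶠ t in nhds (1:ℝ), AEStronglyMeasurable (F t) μ :=
    Filter.Eventually.of_forall fun t => (hcontF t).aestronglyMeasurable.restrict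
  have hF_int : Integrable (F 1) μ := by
    have h1 : F 1 = fun z => c * Real.exp (-((1/2 : ℝ) * X z)) := by
      funext z
      have h2 : -((1:ℝ) ^ 2 * X z) / 2 = -((1/2 : ℝ) * X z) := by ring
      simp only [hF, h2]
    rw [h1]
    exact (gauss_integrable' n (by norm_num) c).integrableOn
  have hF'_meas : AEStronglyMeasurable (F' 1) μ :=
    (hcontF' 1).aestronglyMeasurable.restrict
  have h_bound : ∀ᵐ z ∂μ, ∀ t ∈ Metric.ball (1:ℝ) (1/2),
      ‖F' t z‖ ≤ 24 * c * Real.exp (-((1/16 : ℝ) * X z)) := by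
    refine Filter.Eventually.of_forall fun z t ht => ?_
    rw [Metric.mem_ball, Real.dist_eq] at ht
    obtain ⟨h1, h2⟩ := abs_lt.1 ht
    have ht1 : 1/2 < t := by linarith
    have ht2 : t < 3/2 := by linarith
    have hXz := hX0 z
    have hFeq : F' t z = -(c * (Real.exp (-(t ^ 2 * X z) / 2) * (t * X z))) := by
      simp only [hF']; ring
    rw [hFeq, norm_neg, Real.norm_eq_abs, abs_of_nonneg (by positivity)]
    have e1 : Real.exp (-(t ^ 2 * X z) / 2) ≤ Real.exp (-(X z / 8)) := by
      apply Real.exp_le_exp.2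
      nlinarith [mul_le_mul_of_nonneg_right (show (1:ℝ)/4 ≤ t ^ 2 by nlinarith) hXz]
    have e2 : X z ≤ 16 * Real.exp (X z / 16) := by
      have h := Real.add_one_le_exp (X z / 16)
      linarith
    calc c * (Real.exp (-(t ^ 2 * X z) / 2) * (t * X z))
        ≤ c * (Real.exp (-(X z / 8)) * ((3/2) * (16 * Real.exp (X z / 16)))) := by
          apply mul_le_mul_of_nonneg_left _ hc0
          have ht' : t * X z ≤ (3/2) * (16 * Real.exp (X z / 16)) := by
            calc t * X z ≤ (3/2) * X z := mul_le_mul_of_nonneg_right ht2.le hXz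
              _ ≤ (3/2) * (16 * Real.exp (X z / 16)) := by nlinarith
          exact mul_le_mul e1 ht' (by positivity) (Real.exp_pos _).le
      _ = 24 * c * (Real.exp (-(X z / 8)) * Real.exp (X z / 16)) := by ring
      _ = 24 * c * Real.exp (-((1/16 : ℝ) * X z)) := by
          rw [← Real.exp_add]; congr 1; ring
  have bound_int : Integrable (fun z => 24 * c * Real.exp (-((1/16 : ℝ) * X z))) μ :=
    (gauss_integrable' n (by norm_num) (24 * c)).integrableOn
  have h_diff : ∀ᵐ z ∂μ, ∀ t ∈ Metric.ball (1:ℝ) (1/2),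
      HasDerivAt (F · z) (F' t z) t :=
    Filter.Eventually.of_forall fun z t _ => hderiv z t
  have key := hasDerivAt_integral_of_dominated_loc_of_deriv_le
    (μ := μ) (x₀ := (1:ℝ)) (F := F) (F' := F')
    (bound := fun z => 24 * c * Real.exp (-((1/16 : ℝ) * X z)))
    (Metric.ball_mem_nhds (1:ℝ) (by norm_num : (0:ℝ) < 1/2)) hF_meas hF_int hF'_meas h_bound bound_int h_diff
  have hG := key.2
  have hprod := (hasDerivAt_pow (2 * n) (1:ℝ)).mul hG
  have hev : (fun t : ℝ => (nuC n (t • A)).toReal)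
      =ᶠ[nhds (1:ℝ)] (fun t => t ^ (2 * n) * ∫ z, F t z ∂μ) := by
    filter_upwards [eventually_gt_nhds (by norm_num : (0:ℝ) < 1)] with t ht
    exact nuC_smul n hA_closed ht
  have final := hprod.congr_of_eventuallyEq hev
  have hval1 : ∫ z, F 1 z ∂μ = (nuC n A).toReal := by
    rw [nuC_toReal n hAm]
    refine integral_congr_ae (Filter.Eventually.of_forall fun z => ?_)
    have h2 : -((1:ℝ) ^ 2 * X z) / 2 = -(X z) / 2 := by ring
    simp only [hF, h2, hX, one_pow, one_mul, hc]
  have hval2 : ∫ z, F' 1 z ∂μ = -(∫ z in A, X z ∂(nuC n)) := by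
    have h1 : F' 1 = fun z => -((c * Real.exp (-(X z) / 2)) * X z) := by
      funext z
      have h2 : -((1:ℝ) ^ 2 * X z) / 2 = -(X z) / 2 := by ring
      simp only [hF', h2]; ring
    rw [h1, hμ]
    rw [integral_neg, nuC_setIntegral n hAm X]
  rw [hval1, hval2] at final
  refine final.congr_deriv ?_
  push_cast
  ring
end

section
/- Assume the closed sets K₁ ⊆ ℂ^{n₁}, …, K_ℓ ⊆ ℂ^{n_ℓ} each support the SC-inequality (in their respective dimensions). Then the Cartesian product K₁ × ⋯ × K_ℓ ⊆ ℂ^{n₁+⋯+n_ℓ} supports the SC-inequality. -/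
open MeasureTheory Real Set
open scoped Pointwise

/-- The coordinate of the product space `ℂ^(n 0 + ⋯ + n (ℓ-1))` corresponding to
the `j`-th coordinate of the `i`-th factor (blocks listed in order). -/
def blockIdx {ℓ : ℕ} (n : Fin ℓ → ℕ) (i : Fin ℓ) (j : Fin (n i)) : Fin (∑ k, n k) :=
  ⟨(∑ k ∈ Finset.univ.filter (fun k => k < i), n k) + j, by
    have h1 : (∑ k ∈ Finset.univ.filter (fun k => k < i), n k) + (j : ℕ) <
        (∑ k ∈ Finset.univ.filter (fun k => k < i), n k) + n i :=
      Nat.add_lt_add_left j.isLt _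
    have h2 : (∑ k ∈ insert i (Finset.univ.filter (fun k => k < i)), n k) ≤ ∑ k, n k :=
      Finset.sum_le_sum_of_subset (Finset.subset_univ _)
    rw [Finset.sum_insert (by simp)] at h2
    omega⟩


open scoped ENNReal

noncomputable def g1 : ℂ → ℝ := fun z => (2 * Real.pi)⁻¹ * Real.exp (-(‖z‖ ^ 2) / 2)

noncomputable def f1 : ℂ → ℝ≥0∞ := fun z => ENNReal.ofReal (g1 z)

lemma g1_cont : Continuous g1 := by
  unfold g1
  exact continuous_const.mul ((continuous_norm.pow 2).neg.div_const 2).rexp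

lemma g1_nonneg (z : ℂ) : 0 ≤ g1 z := by
  unfold g1
  positivity

lemma g1_pos (z : ℂ) : 0 < g1 z := by
  unfold g1
  positivity

lemma f1_meas : Measurable f1 :=
  ENNReal.measurable_ofReal.comp g1_cont.measurable

noncomputable def nu1 : Measure ℂ := volume.withDensity f1

/-- The radial primitive computation. -/
lemma radial_integral (R : ℝ) (hR : 0 ≤ R) :
    ∫ r in (0:ℝ)..R, r * ((2 * Real.pi)⁻¹ * Real.exp (-(r ^ 2) / 2))
      = (2 * Real.pi)⁻¹ * (1 - Real.exp (-(R ^ 2) / 2)) := by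
  have key : ∀ r : ℝ, HasDerivAt (fun u : ℝ => -((2 * Real.pi)⁻¹ * Real.exp (-(u ^ 2) / 2)))
      (r * ((2 * Real.pi)⁻¹ * Real.exp (-(r ^ 2) / 2))) r := by
    intro r
    have h1 : HasDerivAt (fun u : ℝ => -(u ^ 2) / 2) (-r) r := by
      have := ((hasDerivAt_pow 2 r).neg).div_const 2
      refine this.congr_deriv ?_
      push_cast
      ring
    have h2 := (h1.exp).const_mul ((2 * Real.pi)⁻¹)
    have h3 := h2.neg
    refine h3.congr_deriv ?_
    ring
  rw [intervalIntegral.integral_eq_sub_of_hasDerivAt (fun r _ => key r) ?_]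
  · rw [show (-(0:ℝ)^2/2) = 0 by ring, Real.exp_zero]
    ring
  · apply Continuous.intervalIntegrable
    fun_prop

lemma disk_integral (R : ℝ) (hR : 0 ≤ R) :
    ∫ z in {z : ℂ | ‖z‖ ≤ R}, g1 z = 1 - Real.exp (-(R ^ 2) / 2) := by
  have hDmeas : MeasurableSet {z : ℂ | ‖z‖ ≤ R} :=
    (isClosed_le continuous_norm continuous_const).measurableSet
  set D := {z : ℂ | ‖z‖ ≤ R} with hD
  set u : ℝ → ℝ := fun r => r * ((2 * Real.pi)⁻¹ * Real.exp (-(r ^ 2) / 2)) with hu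
  set h : ℝ → ℝ := Set.indicator (Set.Ioc 0 R) u with hh
  have hind : ∫ z in D, g1 z = ∫ z, D.indicator g1 z := (integral_indicator hDmeas).symm
  rw [hind, ← Complex.integral_comp_polarCoord_symm (Set.indicator D g1)]
  have heq : Set.EqOn (fun p : ℝ × ℝ => p.1 • Set.indicator D g1 (Complex.polarCoord.symm p))
      (fun p : ℝ × ℝ => h p.1 * (fun _ : ℝ => (1:ℝ)) p.2) polarCoord.target := by
    intro p hp
    have hp1 : 0 < p.1 := by
      rw [show polarCoord.target = Set.Ioi (0:ℝ) ×ˢ Set.Ioo (-Real.pi) Real.pi from rfl] at hp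
      exact hp.1
    have habs : ‖Complex.polarCoord.symm p‖ = p.1 := by
      rw [Complex.norm_polarCoord_symm, abs_of_pos hp1]
    show p.1 • D.indicator g1 (Complex.polarCoord.symm p) = h p.1 * 1
    rw [mul_one, hh]
    by_cases hle : p.1 ≤ R
    · have hmem : Complex.polarCoord.symm p ∈ D := by
        show ‖_‖ ≤ R
        rw [habs]; exact hle
      have hmem' : p.1 ∈ Set.Ioc (0:ℝ) R := ⟨hp1, hle⟩
      rw [Set.indicator_of_mem hmem, Set.indicator_of_mem hmem', hu]
      show p.1 • g1 _ = _
      rw [g1]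
      rw [habs, smul_eq_mul]
    · have hmem : Complex.polarCoord.symm p ∉ D := by
        show ¬ ‖_‖ ≤ R
        rw [habs]; exact hle
      have hmem' : p.1 ∉ Set.Ioc (0:ℝ) R := fun hc => hle hc.2
      rw [Set.indicator_of_notMem hmem', Set.indicator_of_notMem hmem, smul_zero]
  rw [setIntegral_congr_fun polarCoord.open_target.measurableSet heq]
  have htar : polarCoord.target = Set.Ioi (0:ℝ) ×ˢ Set.Ioo (-Real.pi) Real.pi := rfl
  rw [htar, Measure.volume_eq_prod]
  rw [setIntegral_prod_mul h (fun _ : ℝ => (1:ℝ)) (Set.Ioi (0:ℝ)) (Set.Ioo (-Real.pi) Real.pi)]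
  have h1 : ∫ r in Set.Ioi (0:ℝ), h r = (2 * Real.pi)⁻¹ * (1 - Real.exp (-(R ^ 2) / 2)) := by
    rw [hh, setIntegral_indicator measurableSet_Ioc,
      Set.inter_eq_self_of_subset_right Set.Ioc_subset_Ioi_self,
      ← intervalIntegral.integral_of_le hR]
    exact radial_integral R hR
  have h2 : ∫ _ in Set.Ioo (-Real.pi) Real.pi, (1:ℝ) = 2 * Real.pi := by
    simp [Real.volume_Ioo, ENNReal.toReal_ofReal Real.pi_pos.le, two_mul, Real.pi_nonneg,
      ENNReal.toReal_ofReal (by positivity : (0:ℝ) ≤ Real.pi + Real.pi)]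
  rw [h1, h2]
  have hpi : (2 * Real.pi) ≠ 0 := by positivity
  field_simp


lemma abs_le_measurableSet (R : ℝ) : MeasurableSet {z : ℂ | ‖z‖ ≤ R} :=
  (isClosed_le continuous_norm continuous_const).measurableSet

lemma nu1_disk (R : ℝ) (hR : 0 ≤ R) :
    nu1 {z : ℂ | ‖z‖ ≤ R} = ENNReal.ofReal (1 - Real.exp (-(R ^ 2) / 2)) := by
  rw [nu1, withDensity_apply _ (abs_le_measurableSet R)]
  have hInt : IntegrableOn g1 {z : ℂ | ‖z‖ ≤ R} := by
    have hcb : {z : ℂ | ‖z‖ ≤ R} = Metric.closedBall 0 R := by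
      ext z; simp [Metric.mem_closedBall, Complex.dist_eq]
    rw [hcb]
    exact g1_cont.continuousOn.integrableOn_compact (isCompact_closedBall 0 R)
  simp only [f1]
  rw [← ofReal_integral_eq_lintegral_ofReal hInt (ae_of_all _ g1_nonneg), disk_integral R hR]

lemma nu1_univ : nu1 Set.univ = 1 := by
  have hmono : Monotone (fun k : ℕ => {z : ℂ | ‖z‖ ≤ (k : ℝ)}) := by
    intro a b hab z hz
    exact le_trans hz ((Nat.cast_le (α := ℝ)).mpr hab)
  have hU : (⋃ k : ℕ, {z : ℂ | ‖z‖ ≤ (k : ℝ)}) = Set.univ := by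
    ext z
    simp only [Set.mem_iUnion, Set.mem_setOf_eq, Set.mem_univ, iff_true]
    exact exists_nat_ge _
  rw [← hU, hmono.directed_le.measure_iUnion]
  have hk : ∀ k : ℕ, nu1 {z : ℂ | ‖z‖ ≤ (k : ℝ)}
      = ENNReal.ofReal (1 - Real.exp (-((k : ℝ) ^ 2) / 2)) :=
    fun k => nu1_disk k (Nat.cast_nonneg k)
  simp_rw [hk]
  apply le_antisymm
  · exact iSup_le fun k => ENNReal.ofReal_le_one.mpr
      (by linarith [Real.exp_pos (-((k : ℝ) ^ 2) / 2)])
  · have h2 : Filter.Tendsto (fun k : ℕ => -((k : ℝ) ^ 2) / 2) Filter.atTop Filter.atBot := by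
      have hsq : Filter.Tendsto (fun x : ℝ => x ^ 2 / 2) Filter.atTop Filter.atTop :=
        (Filter.tendsto_pow_atTop two_ne_zero).atTop_div_const (by norm_num)
      have := ((Filter.tendsto_neg_atTop_atBot (G := ℝ)).comp hsq).comp (tendsto_natCast_atTop_atTop (R := ℝ))
      refine this.congr (fun k => by simp [Function.comp]; ring)
    have hexp := Real.tendsto_exp_atBot.comp h2
    have hreal : Filter.Tendsto (fun k : ℕ => 1 - Real.exp (-((k : ℝ) ^ 2) / 2))
        Filter.atTop (nhds 1) := by
      simpa using tendsto_const_nhds.sub hexp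
    have htend : Filter.Tendsto (fun k : ℕ => ENNReal.ofReal (1 - Real.exp (-((k : ℝ) ^ 2) / 2)))
        Filter.atTop (nhds 1) := by
      rw [show (1 : ℝ≥0∞) = ENNReal.ofReal 1 by simp]
      exact (ENNReal.continuous_ofReal.tendsto 1).comp hreal
    exact le_of_tendsto' htend (fun k => le_iSup
      (fun k : ℕ => ENNReal.ofReal (1 - Real.exp (-((k : ℝ) ^ 2) / 2))) k)

instance : IsProbabilityMeasure nu1 := ⟨nu1_univ⟩


lemma lintegral_pi_prod {m : ℕ} (f : Fin m → ℂ → ℝ≥0∞) (hf : ∀ i, Measurable (f i)) :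
    ∫⁻ z : Fin m → ℂ, ∏ i, f i (z i) ∂(MeasureTheory.Measure.pi fun _ : Fin m => (volume : Measure ℂ))
      = ∏ i, ∫⁻ w, f i w := by
  induction m with
  | zero => simp [MeasureTheory.lintegral_const, Measure.pi_univ]
  | succ m ih =>
    have hmp := measurePreserving_piFinSuccAbove (fun _ : Fin (m + 1) => (volume : Measure ℂ)) 0
    set G : ℂ × (Fin m → ℂ) → ℝ≥0∞ := fun y => f 0 y.1 * ∏ i, f i.succ (y.2 i) with hG
    have hGm : Measurable G := by
      apply Measurable.mul
      · exact (hf 0).comp measurable_fst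
      · exact (Finset.measurable_prod Finset.univ fun i _ =>
          ((hf i.succ).comp ((measurable_pi_apply i).comp measurable_snd)))
    have step1 : ∫⁻ z : Fin (m+1) → ℂ, ∏ i, f i (z i)
          ∂(MeasureTheory.Measure.pi fun _ => (volume : Measure ℂ))
        = ∫⁻ z : Fin (m+1) → ℂ, G (MeasurableEquiv.piFinSuccAbove (fun _ => ℂ) 0 z)
          ∂(MeasureTheory.Measure.pi fun _ => (volume : Measure ℂ)) := by
      apply lintegral_congr
      intro z
      have hGe : G (MeasurableEquiv.piFinSuccAbove (fun _ => ℂ) 0 z)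
          = f 0 (z 0) * ∏ i : Fin m, f i.succ (z i.succ) := by
        rw [hG]
        simp only [MeasurableEquiv.piFinSuccAbove, MeasurableEquiv.coe_mk, Equiv.coe_fn_mk]
        rfl
      rw [hGe, Fin.prod_univ_succ]
    rw [step1, hmp.lintegral_comp hGm]
    have step2 : ∫⁻ b : ℂ × (Fin m → ℂ), G b ∂(volume.prod (MeasureTheory.Measure.pi fun _ => volume))
        = (∫⁻ w, f 0 w) * ∫⁻ w : Fin m → ℂ, ∏ i, f i.succ (w i)
            ∂(MeasureTheory.Measure.pi fun _ => (volume : Measure ℂ)) :=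
      MeasureTheory.lintegral_prod_mul (hf 0).aemeasurable
        (Finset.measurable_prod Finset.univ fun (i : Fin m) _ =>
          ((hf i.succ).comp (measurable_pi_apply i))).aemeasurable
    rw [step2, ih (fun i => f i.succ) (fun i => hf i.succ), Fin.prod_univ_succ]

lemma dens_prod (m : ℕ) (z : Fin m → ℂ) :
    ENNReal.ofReal (((2 * Real.pi) ^ m)⁻¹ * Real.exp (-(∑ k, ‖z k‖ ^ 2) / 2))
      = ∏ k, f1 (z k) := by
  have h1 : ((2 * Real.pi) ^ m)⁻¹ * Real.exp (-(∑ k, ‖z k‖ ^ 2) / 2)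
      = ∏ k : Fin m, g1 (z k) := by
    simp only [g1]
    rw [Finset.prod_mul_distrib, Finset.prod_const, ← Real.exp_sum, Finset.card_univ,
      Fintype.card_fin, ← inv_pow]
    congr 1
    rw [← Finset.sum_div]
    congr 1
    rw [← Finset.sum_neg_distrib]
  rw [h1, ENNReal.ofReal_prod_of_nonneg (fun k _ => g1_nonneg (z k))]
  rfl

lemma nuC_eq_pi (m : ℕ) : nuC m = MeasureTheory.Measure.pi (fun _ : Fin m => nu1) := by
  refine (MeasureTheory.Measure.pi_eq fun s hs => ?_).symm
  rw [nuC, withDensity_apply _ (MeasurableSet.univ_pi hs)]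
  simp_rw [dens_prod m]
  rw [show (volume : Measure (Fin m → ℂ)) = MeasureTheory.Measure.pi fun _ => volume from
    MeasureTheory.volume_pi]
  rw [← lintegral_indicator (MeasurableSet.univ_pi hs)]
  have hid : ∀ z : Fin m → ℂ, (Set.univ.pi s).indicator (fun z => ∏ k, f1 (z k)) z
      = ∏ k, ((s k).indicator f1) (z k) := by
    intro z
    by_cases hz : z ∈ Set.univ.pi s
    · rw [Set.indicator_of_mem hz]
      exact Finset.prod_congr rfl fun k _ =>
        (Set.indicator_of_mem (hz k (Set.mem_univ k)) _).symm
    · rw [Set.indicator_of_notMem hz]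
      have hex : ∃ k, z k ∉ s k := by
        by_contra hc
        push_neg at hc
        exact hz (fun k _ => hc k)
      obtain ⟨k, hk⟩ := hex
      exact (Finset.prod_eq_zero (Finset.mem_univ k)
        (by rw [Set.indicator_of_notMem hk])).symm
  simp_rw [hid]
  rw [lintegral_pi_prod (fun k => (s k).indicator f1) (fun k => f1_meas.indicator (hs k))]
  refine Finset.prod_congr rfl fun k _ => ?_
  rw [nu1, withDensity_apply _ (hs k), lintegral_indicator (hs k)]

instance nuC_prob (m : ℕ) : IsProbabilityMeasure (nuC m) :=
  ⟨by rw [nuC_eq_pi]; exact measure_univ⟩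

lemma nuC_cyl (m : ℕ) (hm : 0 < m) {R : ℝ} (hR : 0 ≤ R) :
    nuC m (cylC hm R) = ENNReal.ofReal (1 - Real.exp (-(R ^ 2) / 2)) := by
  have hc : cylC hm R = Function.eval (⟨0, hm⟩ : Fin m) ⁻¹' {w : ℂ | ‖w‖ ≤ R} := rfl
  rw [nuC_eq_pi, hc, Set.eval_preimage, Measure.pi_pi]
  rw [Finset.prod_eq_single (⟨0, hm⟩ : Fin m)]
  · rw [Function.update_self, nu1_disk R hR]
  · intro b _ hb
    rw [Function.update_of_ne hb]
    exact nu1_univ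
  · intro h
    exact absurd (Finset.mem_univ _) h

lemma cylC_measurableSet {m : ℕ} (hm : 0 < m) (R : ℝ) : MeasurableSet (cylC hm R) := by
  have hc : cylC hm R = Function.eval (⟨0, hm⟩ : Fin m) ⁻¹' {w : ℂ | ‖w‖ ≤ R} := rfl
  rw [hc]
  exact (measurable_pi_apply _) (abs_le_measurableSet R)

lemma closed_full_eq_univ {m : ℕ} {A : Set (Fin m → ℂ)} (hA : IsClosed A) (h1 : nuC m A = 1) :
    A = Set.univ := by
  set fd : (Fin m → ℂ) → ℝ≥0∞ := fun z =>
    ENNReal.ofReal (((2 * Real.pi) ^ m)⁻¹ * Real.exp (-(∑ k, ‖z k‖ ^ 2) / 2)) with hfd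
  have hdm : Measurable fd := by
    have : fd = fun z => ∏ k, f1 (z k) := by
      funext z
      exact dens_prod m z
    rw [this]
    exact Finset.measurable_prod Finset.univ fun k _ => f1_meas.comp (measurable_pi_apply k)
  have hopen : IsOpen Aᶜ := hA.isOpen_compl
  have hAc : nuC m Aᶜ = 0 := by
    have hcompl := measure_compl hA.measurableSet (measure_ne_top (nuC m) A)
    rw [h1, measure_univ, tsub_self] at hcompl
    exact hcompl
  have hAc2 : ∫⁻ z in Aᶜ, fd z ∂volume = 0 := by
    rw [← withDensity_apply fd hopen.measurableSet]
    exact hAc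
  rw [lintegral_eq_zero_iff hdm, Filter.EventuallyEq, ae_restrict_iff' hopen.measurableSet,
    MeasureTheory.ae_iff] at hAc2
  have hzero : volume Aᶜ = 0 := by
    refine measure_mono_null ?_ hAc2
    intro z hz hcon
    have hpos : fd z ≠ 0 := by
      simp only [hfd]
      exact (ENNReal.ofReal_pos.mpr (by positivity)).ne'
    exact hpos (hcon hz)
  have hempty : Aᶜ = ∅ := (hopen.measure_eq_zero_iff volume).mp hzero
  exact Set.compl_empty_iff.mp hempty

lemma binary_block (a b N : ℕ) (hN : N = a + b) (A : Set (Fin a → ℂ)) (B : Set (Fin b → ℂ))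
    (hA : MeasurableSet A) (hB : MeasurableSet B) :
    nuC N {z : Fin N → ℂ | (fun j => z (Fin.cast hN.symm (Fin.castAdd b j))) ∈ A ∧
        (fun j => z (Fin.cast hN.symm (Fin.natAdd a j))) ∈ B}
      = nuC a A * nuC b B := by
  subst hN
  set E := (MeasurableEquiv.piCongrLeft (fun _ : Fin (a + b) => ℂ)
    finSumFinEquiv).symm.trans (MeasurableEquiv.sumPiEquivProdPi (fun _ => ℂ)) with hE
  have h1 : MeasurePreserving
      (MeasurableEquiv.piCongrLeft (fun _ : Fin (a + b) => ℂ) finSumFinEquiv).symm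
      (MeasureTheory.Measure.pi fun _ : Fin (a + b) => nu1)
      (MeasureTheory.Measure.pi fun _ : Fin a ⊕ Fin b => nu1) :=
    (measurePreserving_piCongrLeft (fun _ : Fin (a + b) => nu1) finSumFinEquiv).symm
      (MeasurableEquiv.piCongrLeft (fun _ : Fin (a + b) => ℂ) finSumFinEquiv)
  have h2 : MeasurePreserving (MeasurableEquiv.sumPiEquivProdPi (fun _ : Fin a ⊕ Fin b => ℂ))
      (MeasureTheory.Measure.pi fun _ : Fin a ⊕ Fin b => nu1)
      ((MeasureTheory.Measure.pi fun _ : Fin a => nu1).prod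
        (MeasureTheory.Measure.pi fun _ : Fin b => nu1)) :=
    measurePreserving_sumPiEquivProdPi (fun _ : Fin a ⊕ Fin b => nu1)
  have hmp : MeasurePreserving E
      (MeasureTheory.Measure.pi fun _ : Fin (a + b) => nu1)
      ((MeasureTheory.Measure.pi fun _ : Fin a => nu1).prod
        (MeasureTheory.Measure.pi fun _ : Fin b => nu1)) := h2.comp h1
  have hEapp : ∀ (z : Fin (a + b) → ℂ),
      E z = (fun j => z (Fin.castAdd b j), fun j => z (Fin.natAdd a j)) := by
    intro z
    have h0 : E z = (fun j => (MeasurableEquiv.piCongrLeft (fun _ : Fin (a + b) => ℂ)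
        finSumFinEquiv).symm z (Sum.inl j),
        fun j => (MeasurableEquiv.piCongrLeft (fun _ : Fin (a + b) => ℂ)
        finSumFinEquiv).symm z (Sum.inr j)) := rfl
    rw [h0]
    have hsymm : ∀ i, (MeasurableEquiv.piCongrLeft (fun _ : Fin (a + b) => ℂ)
        finSumFinEquiv).symm z i = z (finSumFinEquiv i) := fun i =>
      Equiv.piCongrLeft_symm_apply _ _ z i
    refine Prod.ext ?_ ?_
    · funext j
      exact (hsymm (Sum.inl j)).trans (by simp)
    · funext j
      exact (hsymm (Sum.inr j)).trans (by simp)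
  have hpre : {z : Fin (a + b) → ℂ |
      (fun j => z (Fin.cast rfl (Fin.castAdd b j))) ∈ A ∧
      (fun j => z (Fin.cast rfl (Fin.natAdd a j))) ∈ B} = E ⁻¹' (A ×ˢ B) := by
    ext z
    rw [Set.mem_preimage, hEapp z, Set.mem_prod]
    exact Iff.rfl
  rw [nuC_eq_pi, nuC_eq_pi, nuC_eq_pi, hpre,
    hmp.measure_preimage (hA.prod hB).nullMeasurableSet, Measure.prod_prod]

lemma off_succ {ℓ : ℕ} (n : Fin (ℓ + 1) → ℕ) (i : Fin ℓ) :
    (∑ k ∈ Finset.univ.filter (fun k => k < i.succ), n k)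
      = n 0 + ∑ k ∈ Finset.univ.filter (fun k => k < i), n k.succ := by
  rw [Finset.sum_filter, Finset.sum_filter, Fin.sum_univ_succ, if_pos (Fin.succ_pos i)]
  congr 1
  refine Finset.sum_congr rfl fun k _ => ?_
  simp only [Fin.succ_lt_succ_iff]

lemma off_zero {ℓ : ℕ} (n : Fin (ℓ + 1) → ℕ) :
    (∑ k ∈ Finset.univ.filter (fun k => k < (0 : Fin (ℓ + 1))), n k) = 0 := by
  rw [Finset.sum_filter]
  refine Finset.sum_eq_zero fun k _ => ?_
  rw [if_neg (Fin.not_lt_zero k)]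

lemma block_prod (ℓ : ℕ) : ∀ (n : Fin ℓ → ℕ) (N : ℕ) (hN : N = ∑ i, n i)
    (A : ∀ i, Set (Fin (n i) → ℂ)), (∀ i, MeasurableSet (A i)) →
    nuC N {z : Fin N → ℂ | ∀ i, (fun j => z (Fin.cast hN.symm (blockIdx n i j))) ∈ A i}
      = ∏ i, nuC (n i) (A i) := by
  induction ℓ with
  | zero =>
    intro n N hN A hA
    have huniv : {z : Fin N → ℂ | ∀ i, (fun j => z (Fin.cast hN.symm (blockIdx n i j))) ∈ A i}
        = Set.univ := Set.eq_univ_of_forall (fun z i => i.elim0)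
    rw [huniv]
    simp [measure_univ]
  | succ ℓ ih =>
    intro n N hN A hA
    set a := n 0 with ha
    set m : Fin ℓ → ℕ := fun i => n i.succ with hm
    set M := ∑ i, m i with hM
    have hsum : N = a + M := by rw [hN, Fin.sum_univ_succ]
    set B := {w : Fin M → ℂ | ∀ i, (fun j => w (Fin.cast (hM.symm ▸ rfl : M = ∑ i, m i).symm
      (blockIdx m i j))) ∈ A i.succ} with hB
    have hBmeas : MeasurableSet B := by
      rw [hB, Set.setOf_forall]
      exact MeasurableSet.iInter fun i =>
        (measurable_pi_lambda _ fun j => measurable_pi_apply _) (hA i.succ)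
    have e0 : ∀ z : Fin N → ℂ,
        (fun j => z (Fin.cast hN.symm (blockIdx n 0 j)))
          = (fun j => z (Fin.cast hsum.symm (Fin.castAdd M j))) := by
      intro z
      funext j
      congr 1
      apply Fin.ext
      show ((∑ k ∈ Finset.univ.filter (fun k => k < (0 : Fin (ℓ+1))), n k) + (j : ℕ)) = (j : ℕ)
      rw [off_zero n]
      omega
    have es : ∀ (z : Fin N → ℂ) (i : Fin ℓ),
        (fun j => z (Fin.cast hN.symm (blockIdx n i.succ j)))
          = (fun j : Fin (m i) => (fun j' : Fin M => z (Fin.cast hsum.symm (Fin.natAdd a j')))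
              (Fin.cast (hM.symm ▸ rfl : M = ∑ i, m i).symm (blockIdx m i j))) := by
      intro z i
      funext j
      show z _ = z _
      congr 1
      apply Fin.ext
      show ((∑ k ∈ Finset.univ.filter (fun k => k < i.succ), n k) + (j : ℕ))
        = a + ((∑ k ∈ Finset.univ.filter (fun k => k < i), m k) + (j : ℕ))
      rw [off_succ n i, show (∑ k ∈ Finset.univ.filter (fun k => k < i), m k)
        = ∑ k ∈ Finset.univ.filter (fun k => k < i), n k.succ from rfl, ha]
      omega
    have hSeq : {z : Fin N → ℂ | ∀ i, (fun j => z (Fin.cast hN.symm (blockIdx n i j))) ∈ A i}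
        = {z : Fin N → ℂ | (fun j => z (Fin.cast hsum.symm (Fin.castAdd M j))) ∈ A 0 ∧
            (fun j => z (Fin.cast hsum.symm (Fin.natAdd a j))) ∈ B} := by
      ext z
      simp only [Set.mem_setOf_eq]
      constructor
      · intro h
        refine ⟨e0 z ▸ h 0, fun i => ?_⟩
        have := h i.succ
        rw [es z i] at this
        exact this
      · rintro ⟨h0, hrest⟩ i
        refine Fin.cases ?_ (fun i' => ?_) i
        · rw [e0 z]
          exact h0
        · rw [es z i']
          exact hrest i'
    rw [hSeq, binary_block a M N hsum (A 0) B (hA 0) hBmeas,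
      ih m M rfl (fun i => A i.succ) (fun i => hA i.succ), Fin.prod_univ_succ]

lemma nuC_block_prod {ℓ : ℕ} (n : Fin ℓ → ℕ) (A : ∀ i, Set (Fin (n i) → ℂ))
    (hA : ∀ i, MeasurableSet (A i)) :
    nuC (∑ i, n i) {z : Fin (∑ i, n i) → ℂ | ∀ i, (fun j => z (blockIdx n i j)) ∈ A i}
      = ∏ i, nuC (n i) (A i) :=
  block_prod ℓ n (∑ i, n i) rfl A hA

lemma smul_cylC {m : ℕ} (hm : 0 < m) {t : ℝ} (R : ℝ) (ht : 0 < t) :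
    t • cylC hm R = cylC hm (t * R) := by
  ext z
  rw [Set.mem_smul_set_iff_inv_smul_mem₀ (ne_of_gt ht)]
  show ‖(t⁻¹ • z) ⟨0, hm⟩‖ ≤ R ↔ ‖z ⟨0, hm⟩‖ ≤ t * R
  rw [Pi.smul_apply, show (t⁻¹ • z ⟨0, hm⟩) = ((t⁻¹ : ℝ) : ℂ) * z ⟨0, hm⟩ from
    Complex.real_smul, norm_mul, Complex.norm_real, Real.norm_eq_abs, abs_of_pos (inv_pos.mpr ht)]
  rw [inv_mul_le_iff₀ ht]

lemma smul_blockset {ℓ : ℕ} (n : Fin ℓ → ℕ) (K : ∀ i, Set (Fin (n i) → ℂ)) {t : ℝ}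
    (ht : t ≠ 0) :
    t • {z : Fin (∑ i, n i) → ℂ | ∀ i, (fun j => z (blockIdx n i j)) ∈ K i}
      = {z : Fin (∑ i, n i) → ℂ | ∀ i, (fun j => z (blockIdx n i j)) ∈ t • K i} := by
  ext z
  rw [Set.mem_smul_set_iff_inv_smul_mem₀ ht]
  simp only [Set.mem_setOf_eq]
  refine forall_congr' fun i => ?_
  rw [Set.mem_smul_set_iff_inv_smul_mem₀ ht]
  exact Iff.rfl

lemma rpow_add_le {u v a b : ℝ} (s : ℝ) (hs : 1 ≤ s) (hu0 : 0 ≤ u) (hua : u ≤ a) (hub : u ≤ b)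
    (hav : a ≤ v) (hbv : b ≤ v) (hsum : u + v = a + b) :
    a ^ s + b ^ s ≤ u ^ s + v ^ s := by
  rcases eq_or_lt_of_le (hua.trans hav) with hEq | hlt
  · have haa : a = u := le_antisymm (hEq ▸ hav) hua
    have hbb : b = u := le_antisymm (hEq ▸ hbv) hub
    have hvv : v = u := by linarith
    rw [haa, hbb, hvv]
  · have hcv := convexOn_rpow hs
    have hvu : (0:ℝ) < v - u := by linarith
    set lam := (v - a) / (v - u) with hlam
    have hl0 : 0 ≤ lam := div_nonneg (by linarith) (by linarith)
    have hl1 : lam ≤ 1 := by rw [hlam, div_le_one hvu]; linarith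
    have hae : lam * u + (1 - lam) * v = a := by
      rw [hlam]
      field_simp [hlam, ne_of_gt hvu]
      ring
    have hbe : (1 - lam) * u + lam * v = b := by
      rw [hlam]
      field_simp [hlam, ne_of_gt hvu]
      nlinarith [hsum]
    have hv0 : 0 ≤ v := hu0.trans (hua.trans hav)
    have h1 := hcv.2 (Set.mem_Ici.mpr hu0) (Set.mem_Ici.mpr hv0) hl0 (by linarith)
      (by ring : lam + (1 - lam) = 1)
    have h2 := hcv.2 (Set.mem_Ici.mpr hu0) (Set.mem_Ici.mpr hv0) (by linarith : 0 ≤ 1 - lam)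
      hl0 (by ring : (1 - lam) + lam = 1)
    simp only [smul_eq_mul] at h1 h2
    rw [hae] at h1
    rw [hbe] at h2
    nlinarith [h1, h2]

lemma convex_pair {a b : ℝ} (s : ℝ) (hs : 1 ≤ s) (ha0 : 0 ≤ a) (ha1 : a ≤ 1) (hb0 : 0 ≤ b)
    (hb1 : b ≤ 1) :
    a ^ s + b ^ s ≤ (a * b) ^ s + (a + b - a * b) ^ s := by
  refine rpow_add_le s hs (mul_nonneg ha0 hb0) ?_ ?_ ?_ ?_ (by ring)
  · nlinarith
  · nlinarith
  · nlinarith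
  · nlinarith

lemma prod_sc_ineq (s : ℝ) (hs : 1 ≤ s) {ι : Type*} [DecidableEq ι] (t : Finset ι) (x : ι → ℝ)
    (h0 : ∀ i, 0 ≤ x i) (h1 : ∀ i, x i ≤ 1) :
    1 - (1 - ∏ i ∈ t, (1 - x i)) ^ s ≤ ∏ i ∈ t, (1 - x i ^ s) := by
  induction t using Finset.induction with
  | empty => simp [Real.zero_rpow (by linarith : s ≠ 0)]
  | @insert j t hj ih =>
    rw [Finset.prod_insert hj, Finset.prod_insert hj]
    have hP0 : 0 ≤ ∏ i ∈ t, (1 - x i) := Finset.prod_nonneg fun i _ => by linarith [h1 i]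
    have hP1 : ∏ i ∈ t, (1 - x i) ≤ 1 :=
      Finset.prod_le_one (fun i _ => by linarith [h1 i]) (fun i _ => by linarith [h0 i])
    set P := ∏ i ∈ t, (1 - x i) with hP
    set c := 1 - P with hc
    have hc0 : 0 ≤ c := by rw [hc]; linarith
    have hc1 : c ≤ 1 := by rw [hc]; linarith
    have hxj1 : x j ^ s ≤ 1 := Real.rpow_le_one (h0 j) (h1 j) (by linarith)
    have hxj0 : 0 ≤ x j ^ s := Real.rpow_nonneg (h0 j) s
    have hnn : 0 ≤ 1 - x j ^ s := by linarith
    have step1 : (1 - x j ^ s) * (1 - c ^ s) ≤ (1 - x j ^ s) * ∏ i ∈ t, (1 - x i ^ s) :=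
      mul_le_mul_of_nonneg_left ih hnn
    have key : 1 - (1 - (1 - x j) * P) ^ s ≤ (1 - x j ^ s) * (1 - c ^ s) := by
      have hrw : (1 - (1 - x j) * P) = x j + c - x j * c := by rw [hc]; ring
      rw [hrw]
      have h2 := convex_pair s hs (h0 j) (h1 j) hc0 hc1
      have h3 : (x j * c) ^ s = x j ^ s * c ^ s := Real.mul_rpow (h0 j) hc0
      nlinarith [h2, h3]
    exact key.trans step1

/-- **Tensorization.** If the closed sets `K i ⊆ ℂ^(n i)` each support the
SC-inequality, then so does their Cartesian product
`K 0 × ⋯ × K (ℓ-1) ⊆ ℂ^(n 0 + ⋯ + n (ℓ-1))`. -/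
theorem supportsSC_prod
    (ℓ : ℕ) (n : Fin ℓ → ℕ) (hn : ∀ i, 0 < n i) (hs : 0 < ∑ i, n i)
    (K : ∀ i, Set (Fin (n i) → ℂ))
    (hK_closed : ∀ i, IsClosed (K i))
    (hK_sc : ∀ i, SupportsSC (hn i) (K i)) :
    SupportsSC hs
      {z : Fin (∑ i, n i) → ℂ | ∀ i, (fun j => z (blockIdx n i j)) ∈ K i} := by
  intro R hR hmeas t ht
  have ht0 : (0:ℝ) < t := lt_of_lt_of_le one_pos ht
  have hKmeas : ∀ i, MeasurableSet (K i) := fun i => (hK_closed i).measurableSet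
  have htKmeas : ∀ i, MeasurableSet (t • K i) := fun i =>
    ((hK_closed i).smul_of_ne_zero (ne_of_gt ht0)).measurableSet
  set sExp : ℝ := t * t with hsExp
  have hsExp1 : 1 ≤ sExp := by nlinarith
  set a : Fin ℓ → ℝ := fun i => (nuC (n i) (K i)).toReal with haDef
  have ha0 : ∀ i, 0 ≤ a i := fun i => ENNReal.toReal_nonneg
  have ha1 : ∀ i, a i ≤ 1 := fun i => by
    rw [haDef]
    exact ENNReal.toReal_le_of_le_ofReal one_pos.le (by simpa using prob_le_one)
  -- the per-factor lower bound
  have hbound : ∀ i, ENNReal.ofReal (1 - (1 - a i) ^ sExp) ≤ nuC (n i) (t • K i) := by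
    intro i
    by_cases hone : nuC (n i) (K i) = 1
    · have hKuniv : K i = Set.univ := closed_full_eq_univ (hK_closed i) hone
      have hsmul : t • K i = Set.univ := by
        rw [hKuniv]
        exact Set.smul_set_univ₀ (ne_of_gt ht0)
      have hai : a i = 1 := by simp only [haDef]; rw [hone]; simp
      rw [hsmul, measure_univ, hai, sub_self, Real.zero_rpow (by nlinarith : sExp ≠ 0),
        sub_zero, ENNReal.ofReal_one]
    · have hlt : nuC (n i) (K i) < 1 := lt_of_le_of_ne prob_le_one hone
      have halt : a i < 1 := by
        rw [haDef, show (1:ℝ) = (1:ℝ≥0∞).toReal by simp]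
        exact ENNReal.toReal_strict_mono (by simp) hlt
      have hxipos : 0 < 1 - a i := by linarith
      set Ri := Real.sqrt (-2 * Real.log (1 - a i)) with hRi
      have hRi0 : 0 ≤ Ri := Real.sqrt_nonneg _
      have hlog : Real.log (1 - a i) ≤ 0 := Real.log_nonpos (by linarith) (by linarith [ha0 i])
      have hRisq : Ri ^ 2 = -2 * Real.log (1 - a i) := Real.sq_sqrt (by linarith)
      have hexp : Real.exp (-(Ri ^ 2) / 2) = 1 - a i := by
        rw [hRisq, show -(-2 * Real.log (1 - a i)) / 2 = Real.log (1 - a i) by ring]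
        exact Real.exp_log hxipos
      have hcylRi : nuC (n i) (K i) = nuC (n i) (cylC (hn i) Ri) := by
        rw [nuC_cyl _ (hn i) hRi0, hexp, show (1:ℝ) - (1 - a i) = a i by ring]
        exact (ENNReal.ofReal_toReal (measure_ne_top _ _)).symm
      have hsc := hK_sc i Ri hRi0 hcylRi t ht
      rw [smul_cylC (hn i) Ri ht0, nuC_cyl _ (hn i) (by positivity : (0:ℝ) ≤ t * Ri)] at hsc
      refine le_trans (le_of_eq ?_) hsc
      congr 2
      have hlogeq : Real.log (1 - a i) = -(Ri ^ 2) / 2 := by rw [← hexp, Real.log_exp]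
      rw [Real.rpow_def_of_pos hxipos, hlogeq,
        show -(Ri ^ 2) / 2 * sExp = -((t * Ri) ^ 2) / 2 by rw [hsExp]; ring]
  -- the constraint
  have hS : nuC (∑ i, n i) {z : Fin (∑ i, n i) → ℂ | ∀ i, (fun j => z (blockIdx n i j)) ∈ K i}
      = ENNReal.ofReal (∏ i, a i) := by
    rw [nuC_block_prod n K hKmeas,
      ENNReal.ofReal_prod_of_nonneg (fun i _ => ENNReal.toReal_nonneg)]
    exact (Finset.prod_congr rfl fun i _ => (ENNReal.ofReal_toReal (measure_ne_top _ _))).symm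
  have hexpR1 : Real.exp (-(R ^ 2) / 2) ≤ 1 := by
    rw [← Real.exp_zero]
    apply Real.exp_le_exp.mpr
    nlinarith
  have hy : ∏ i, a i = 1 - Real.exp (-(R ^ 2) / 2) := by
    have hh := hmeas
    rw [hS, nuC_cyl _ hs hR] at hh
    exact (ENNReal.ofReal_eq_ofReal_iff (Finset.prod_nonneg fun i _ => ha0 i)
      (by linarith)).mp hh
  -- scalar inequality
  have hscalar : 1 - Real.exp (-(R ^ 2) / 2) ^ sExp ≤ ∏ i, (1 - (1 - a i) ^ sExp) := by
    have h := prod_sc_ineq sExp hsExp1 Finset.univ (fun i => 1 - a i)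
      (fun i => by show (0:ℝ) ≤ 1 - a i; linarith [ha1 i])
      (fun i => by show (1:ℝ) - a i ≤ 1; linarith [ha0 i])
    have hprod : ∏ i, (1 - (1 - a i)) = ∏ i, a i := Finset.prod_congr rfl fun i _ => by ring
    rw [hprod, hy, show (1:ℝ) - (1 - Real.exp (-(R ^ 2) / 2)) = Real.exp (-(R ^ 2) / 2)
      by ring] at h
    exact h
  calc nuC (∑ i, n i) (t • cylC hs R)
      = ENNReal.ofReal (1 - Real.exp (-((t * R) ^ 2) / 2)) := by
        rw [smul_cylC hs R ht0, nuC_cyl _ hs (by positivity : (0:ℝ) ≤ t * R)]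
    _ = ENNReal.ofReal (1 - Real.exp (-(R ^ 2) / 2) ^ sExp) := by
        congr 2
        rw [Real.rpow_def_of_pos (Real.exp_pos _), Real.log_exp,
          show -(R ^ 2) / 2 * sExp = -((t * R) ^ 2) / 2 by rw [hsExp]; ring]
    _ ≤ ENNReal.ofReal (∏ i, (1 - (1 - a i) ^ sExp)) := ENNReal.ofReal_le_ofReal hscalar
    _ = ∏ i, ENNReal.ofReal (1 - (1 - a i) ^ sExp) := by
        refine ENNReal.ofReal_prod_of_nonneg fun i _ => ?_
        have : (1 - a i) ^ sExp ≤ 1 :=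
          Real.rpow_le_one (by linarith [ha1 i]) (by linarith [ha0 i]) (by linarith)
        linarith
    _ ≤ ∏ i, nuC (n i) (t • K i) := Finset.prod_le_prod' fun i _ => hbound i
    _ = nuC (∑ i, n i)
        (t • {z : Fin (∑ i, n i) → ℂ | ∀ i, (fun j => z (blockIdx n i j)) ∈ K i}) := by
        rw [smul_blockset n K (ne_of_gt ht0), nuC_block_prod n _ htKmeas]
end
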